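/- arXiv:1209.3828 — 17 statements merged into one kernel-verified Lean document; each statement's English description precedes it below -/
import Mathlib

section
/- Let q be a prime power, ℓ a divisor of q-1, s=(q-1)/ℓ, γ a primitive element of F_q, and C_i = γ^i·C_0 where C_0 is the subgroup of ℓ-th powers in F_q*. For A_0,...,A_{ℓ-1} ∈ F_q* and positive integers r_0,...,r_{ℓ-1}, the map P sending 0 to 0 and x ∈ C_i to A_i·x^{r_i} is a bijection of F_q if and only if gcd(r_i, s)=1 for all i and the set {A_i^s · ζ^{i·r_i} : i = 0,...,ℓ-1} equals the set μ_ℓ of all ℓ-th roots of unity in F_q, where ζ = γ^s. -/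
theorem stmt_0 {F : Type*} [Field F] [Fintype F] (q ℓ s : ℕ)
    (hq : Fintype.card F = q) (hℓpos : 0 < ℓ) (hℓ : ℓ ∣ q - 1) (hs : s = (q - 1) / ℓ)
    (γ : F) (hγ0 : γ ≠ 0) (hγ : ∀ x : F, x ≠ 0 → ∃ k : ℕ, γ ^ k = x)
    (A : ℕ → F) (hA : ∀ i < ℓ, A i ≠ 0)
    (r : ℕ → ℕ) (hr : ∀ i < ℓ, 0 < r i)
    (P : F → F) (hP0 : P 0 = 0)
    (hP : ∀ i < ℓ, ∀ x : F, x ≠ 0 → x ^ s = (γ ^ s) ^ i → P x = A i * x ^ (r i)) :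
    Function.Bijective P ↔
      (∀ i < ℓ, Nat.gcd (r i) s = 1) ∧
        {z : F | ∃ i < ℓ, z = (A i) ^ s * (γ ^ s) ^ (i * r i)} = {z : F | z ^ ℓ = 1} := by
  classical
  have hq2 : 2 ≤ q := by rw [← hq]; exact Fintype.one_lt_card
  set N := q - 1 with hNdef
  have hN0 : 0 < N := by omega
  have hsℓ : s * ℓ = N := by rw [hs]; exact Nat.div_mul_cancel hℓ
  have hs0 : 0 < s := by
    rcases Nat.eq_zero_or_pos s with h | h
    · exfalso; rw [h, zero_mul] at hsℓ; omega
    · exact h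
  have hγN : γ ^ N = 1 := by
    have := FiniteField.pow_card_sub_one_eq_one γ hγ0
    rwa [hq] at this
  -- order of γ is N
  have hm_dvd : orderOf γ ∣ N := orderOf_dvd_of_pow_eq_one hγN
  have hmpos : 0 < orderOf γ := by
    rcases Nat.eq_zero_or_pos (orderOf γ) with h | h
    · exfalso; rw [h] at hm_dvd; omega
    · exact h
  have hNle : N ≤ orderOf γ := by
    have hsub : (Finset.univ.erase (0 : F)) ⊆
        (Finset.range (orderOf γ)).image (fun k => γ ^ k) := by
      intro x hx
      have hx0 : x ≠ 0 := (Finset.mem_erase.mp hx).1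
      obtain ⟨k, hk⟩ := hγ x hx0
      exact Finset.mem_image.mpr ⟨k % orderOf γ, Finset.mem_range.mpr (Nat.mod_lt _ hmpos),
        by rw [pow_mod_orderOf, hk]⟩
    calc N = (Finset.univ.erase (0 : F)).card := by
            rw [Finset.card_erase_of_mem (Finset.mem_univ 0), Finset.card_univ, hq]
      _ ≤ ((Finset.range (orderOf γ)).image (fun k => γ ^ k)).card := Finset.card_le_card hsub
      _ ≤ (Finset.range (orderOf γ)).card := Finset.card_image_le
      _ = orderOf γ := Finset.card_range _
  have hord : orderOf γ = N := le_antisymm (Nat.le_of_dvd hN0 hm_dvd) hNle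
  set ζ := γ ^ s with hζ
  have hζ0 : ζ ≠ 0 := pow_ne_zero _ hγ0
  have hζℓ : ζ ^ ℓ = 1 := by rw [hζ, ← pow_mul, hsℓ, hγN]
  have hζred : ∀ k, ζ ^ k = ζ ^ (k % ℓ) := by
    intro k
    conv_lhs => rw [← Nat.div_add_mod k ℓ]
    rw [pow_add, pow_mul, hζℓ, one_pow, one_mul]
  -- each nonzero element is in some coset
  have hcoset : ∀ x : F, x ≠ 0 → ∃ i < ℓ, x ^ s = ζ ^ i := by
    intro x hx
    obtain ⟨k, hk⟩ := hγ x hx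
    refine ⟨k % ℓ, Nat.mod_lt _ hℓpos, ?_⟩
    have h1 : x ^ s = ζ ^ k := by rw [← hk, hζ, ← pow_mul, ← pow_mul, mul_comm]
    rw [h1, hζred]
  -- ζ powers enumerate ℓ-th roots of unity
  have hζdvd : ∀ d, ζ ^ d = 1 → ℓ ∣ d := by
    intro d hd
    have h1 : γ ^ (s * d) = 1 := by rw [pow_mul, ← hζ, hd]
    have h2 : N ∣ s * d := hord ▸ orderOf_dvd_of_pow_eq_one h1
    rw [← hsℓ] at h2
    exact (Nat.mul_dvd_mul_iff_left hs0).mp h2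
  have hζd : ∀ i j, i < ℓ → j < ℓ → ζ ^ i = ζ ^ j → i = j := by
    have key : ∀ i j, i ≤ j → j < ℓ → ζ ^ i = ζ ^ j → i = j := by
      intro i j hij hj h
      have h1 : ζ ^ i * ζ ^ (j - i) = ζ ^ i * 1 := by
        rw [mul_one, ← pow_add, Nat.add_sub_cancel' hij, h]
      have h2 : ζ ^ (j - i) = 1 := mul_left_cancel₀ (pow_ne_zero _ hζ0) h1
      have h3 := hζdvd _ h2
      have h4 : j - i = 0 := Nat.eq_zero_of_dvd_of_lt h3 (by omega)
      omega
    intro i j hi hj h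
    rcases le_total i j with hij | hij
    · exact key i j hij hj h
    · exact (key j i hij hi h.symm).symm
  have hroot : ∀ z : F, z ^ ℓ = 1 → ∃ j < ℓ, z = ζ ^ j := by
    intro z hz
    have hz0 : z ≠ 0 := by
      rintro rfl
      rw [zero_pow hℓpos.ne'] at hz
      exact zero_ne_one hz
    obtain ⟨k, hk⟩ := hγ z hz0
    have h1 : γ ^ (k * ℓ) = 1 := by rw [pow_mul, hk, hz]
    have h2 : N ∣ k * ℓ := hord ▸ orderOf_dvd_of_pow_eq_one h1
    rw [← hsℓ] at h2
    have hsk : s ∣ k := (Nat.mul_dvd_mul_iff_right hℓpos).mp h2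
    obtain ⟨c, hc⟩ := hsk
    refine ⟨c % ℓ, Nat.mod_lt _ hℓpos, ?_⟩
    rw [← hζred, ← hk, hc, hζ, ← pow_mul]
  -- cancellation lemma within a coset
  have hcancel : ∀ rr : ℕ, Nat.gcd rr s = 1 → ∀ x y : F, x ≠ 0 → y ≠ 0 →
      x ^ s = y ^ s → x ^ rr = y ^ rr → x = y := by
    intro rr hg x y hx hy hse hre
    have hts : (x * y⁻¹) ^ s = 1 := by
      rw [mul_pow, inv_pow, hse, mul_inv_cancel₀ (pow_ne_zero _ hy)]
    have htr : (x * y⁻¹) ^ rr = 1 := by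
      rw [mul_pow, inv_pow, hre, mul_inv_cancel₀ (pow_ne_zero _ hy)]
    have h1 : orderOf (x * y⁻¹) ∣ Nat.gcd rr s :=
      Nat.dvd_gcd (orderOf_dvd_of_pow_eq_one htr) (orderOf_dvd_of_pow_eq_one hts)
    rw [hg, Nat.dvd_one] at h1
    exact (mul_inv_eq_one₀ hy).mp (orderOf_eq_one_iff.mp h1)
  -- P never sends a nonzero element to 0 (used in both directions)
  have hAN : ∀ i, i < ℓ → A i ^ N = 1 := by
    intro i hi
    have := FiniteField.pow_card_sub_one_eq_one (A i) (hA i hi)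
    rwa [hq] at this
  constructor
  · -- forward direction
    intro hbij
    constructor
    · intro i hi
      by_contra hgcd
      set d := Nat.gcd (r i) s with hd
      have hdr : d ∣ r i := Nat.gcd_dvd_left _ _
      have hds : d ∣ s := Nat.gcd_dvd_right _ _
      have hd0 : 0 < d := Nat.gcd_pos_of_pos_left _ (hr i hi)
      have hd2 : 2 ≤ d := by omega
      have hdN : d ∣ N := hds.trans ⟨ℓ, hsℓ.symm⟩
      obtain ⟨a, ha⟩ := hdN
      obtain ⟨b, hb⟩ := hdr
      obtain ⟨c, hc⟩ := hds
      have hNd : N / d = a := by rw [ha, Nat.mul_div_cancel_left _ hd0]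
      set w := γ ^ (N / d) with hw
      have hwr : w ^ r i = 1 := by
        rw [hw, ← pow_mul, hNd, hb]
        have : a * (d * b) = N * b := by rw [ha]; ring
        rw [this, pow_mul, hγN, one_pow]
      have hws : w ^ s = 1 := by
        rw [hw, ← pow_mul, hNd, hc]
        have : a * (d * c) = N * c := by rw [ha]; ring
        rw [this, pow_mul, hγN, one_pow]
      have hw1 : w ≠ 1 := by
        intro h
        have h2 : orderOf γ ∣ N / d := orderOf_dvd_of_pow_eq_one (show γ ^ (N / d) = 1 from h)
        rw [hord] at h2
        have hlt : N / d < N := Nat.div_lt_self hN0 hd2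
        have hpos : 0 < N / d := Nat.div_pos (Nat.le_of_dvd hN0 ⟨a, ha⟩) hd0
        exact absurd (Nat.le_of_dvd hpos h2) (by omega)
      set x := γ ^ i with hxdef
      set y := γ ^ i * w with hydef
      have hx0 : x ≠ 0 := pow_ne_zero _ hγ0
      have hw0 : w ≠ 0 := pow_ne_zero _ hγ0
      have hy0 : y ≠ 0 := mul_ne_zero hx0 hw0
      have hxs : x ^ s = ζ ^ i := by rw [hxdef, hζ, ← pow_mul, ← pow_mul, mul_comm]
      have hys : y ^ s = ζ ^ i := by rw [hydef, mul_pow, hws, mul_one, hxs]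
      have hPxy : P x = P y := by
        rw [hP i hi x hx0 hxs, hP i hi y hy0 hys, hydef, mul_pow, hwr, mul_one]
      have hxy : x = y := hbij.1 hPxy
      apply hw1
      have : x * 1 = x * w := by rw [mul_one]; exact hxy
      exact (mul_left_cancel₀ hx0 this).symm
    · ext z
      simp only [Set.mem_setOf_eq]
      constructor
      · rintro ⟨i, hi, rfl⟩
        have h1 : ((γ ^ s) ^ (i * r i)) ^ ℓ = 1 := by
          rw [← hζ, ← pow_mul, mul_comm (i * r i) ℓ, pow_mul, hζℓ, one_pow]
        rw [mul_pow, ← pow_mul, hsℓ, hAN i hi, one_mul, h1]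
      · intro hz
        obtain ⟨j, hj, rfl⟩ := hroot z hz
        obtain ⟨x, hx⟩ := hbij.2 (γ ^ j)
        have hx0 : x ≠ 0 := by
          rintro rfl
          rw [hP0] at hx
          exact pow_ne_zero j hγ0 hx.symm
        obtain ⟨i, hi, hxs⟩ := hcoset x hx0
        refine ⟨i, hi, ?_⟩
        have h1 : ζ ^ j = (P x) ^ s := by
          rw [hx, hζ, ← pow_mul, ← pow_mul, mul_comm]
        rw [h1, hP i hi x hx0 hxs, mul_pow, ← pow_mul, mul_comm (r i) s, pow_mul, hxs,
          ← pow_mul]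
  · -- backward direction
    rintro ⟨hg, hset⟩
    rw [← Finite.injective_iff_bijective]
    have hPne : ∀ x : F, x ≠ 0 → P x ≠ 0 := by
      intro x hx
      obtain ⟨i, hi, hxs⟩ := hcoset x hx
      rw [hP i hi x hx hxs]
      exact mul_ne_zero (hA i hi) (pow_ne_zero _ hx)
    set f : ℕ → F := fun i => A i ^ s * ζ ^ (i * r i) with hf
    have hScoe : (((Finset.range ℓ).image f : Finset F) : Set F) = {z : F | z ^ ℓ = 1} := by
      rw [← hset]
      ext z
      simp only [Finset.coe_image, Finset.coe_range, Set.mem_image, Set.mem_Iio,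
        Set.mem_setOf_eq]
      constructor
      · rintro ⟨i, hi, rfl⟩; exact ⟨i, hi, rfl⟩
      · rintro ⟨i, hi, rfl⟩; exact ⟨i, hi, rfl⟩
    have hTcoe : (((Finset.range ℓ).image (fun j => ζ ^ j) : Finset F) : Set F) =
        {z : F | z ^ ℓ = 1} := by
      ext z
      simp only [Finset.coe_image, Finset.coe_range, Set.mem_image, Set.mem_Iio,
        Set.mem_setOf_eq]
      constructor
      · rintro ⟨j, hj, rfl⟩
        rw [← pow_mul, mul_comm j ℓ, pow_mul, hζℓ, one_pow]
      · intro hz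
        obtain ⟨j, hj, rfl⟩ := hroot z hz
        exact ⟨j, hj, rfl⟩
    have hST : (Finset.range ℓ).image f = (Finset.range ℓ).image (fun j => ζ ^ j) :=
      Finset.coe_injective (hScoe.trans hTcoe.symm)
    have hTcard : ((Finset.range ℓ).image (fun j => ζ ^ j)).card = ℓ := by
      rw [Finset.card_image_of_injOn, Finset.card_range]
      intro a ha b hb h
      exact hζd a b (Finset.mem_range.mp ha) (Finset.mem_range.mp hb) h
    have hfinj : Set.InjOn f (Finset.range ℓ) :=
      Finset.injOn_of_card_image_eq (by rw [hST, hTcard, Finset.card_range])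
    intro x y hxy
    by_cases hx : x = 0
    · by_cases hy : y = 0
      · rw [hx, hy]
      · exfalso
        apply hPne y hy
        rw [← hxy, hx, hP0]
    · by_cases hy : y = 0
      · exfalso
        apply hPne x hx
        rw [hxy, hy, hP0]
      · obtain ⟨i, hi, hxs⟩ := hcoset x hx
        obtain ⟨j, hj, hys⟩ := hcoset y hy
        have hPxs : (P x) ^ s = f i := by
          rw [hP i hi x hx hxs, mul_pow, ← pow_mul, mul_comm (r i) s, pow_mul, hxs, ← pow_mul]
        have hPys : (P y) ^ s = f j := by
          rw [hP j hj y hy hys, mul_pow, ← pow_mul, mul_comm (r j) s, pow_mul, hys, ← pow_mul]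
        have hij : i = j := hfinj (by simpa using hi) (by simpa using hj)
          (by rw [← hPxs, ← hPys, hxy])
        subst hij
        have hxr : x ^ r i = y ^ r i := by
          apply mul_left_cancel₀ (hA i hi)
          rw [← hP i hi x hx hxs, ← hP i hi y hy hys, hxy]
        exact hcancel (r i) (hg i hi) x y hx hy (hxs.trans hys.symm) hxr
end

section
/- Let q be a prime power with ℓ ∣ q-1, s=(q-1)/ℓ, γ primitive in F_q, ζ=γ^s. For A_0,...,A_{ℓ-1} ∈ F_q* and positive integers r_0,...,r_{ℓ-1} with gcd(r_i,s)=1, the piecewise map P (P(0)=0, P(x)=A_i x^{r_i} for x ∈ C_i) is a bijection of F_q if and only if for every i < i' in {0,...,ℓ-1}, A_i·C_{i·r_i mod ℓ} ≠ A_{i'}·C_{i'·r_{i'} mod ℓ} as cosets of C_0 in F_q*. -/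
theorem stmt_1 {F : Type*} [Field F] [Fintype F] (q ℓ s : ℕ)
    (hq : Fintype.card F = q) (hℓpos : 0 < ℓ) (hℓ : ℓ ∣ q - 1) (hs : s = (q - 1) / ℓ)
    (γ : F) (hγ0 : γ ≠ 0) (hγ : ∀ x : F, x ≠ 0 → ∃ k : ℕ, γ ^ k = x)
    (A : ℕ → F) (hA : ∀ i < ℓ, A i ≠ 0)
    (r : ℕ → ℕ) (hr : ∀ i < ℓ, 0 < r i) (hgcd : ∀ i < ℓ, Nat.gcd (r i) s = 1)
    (P : F → F) (hP0 : P 0 = 0)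
    (hP : ∀ i < ℓ, ∀ x : F, x ≠ 0 → x ^ s = (γ ^ s) ^ i → P x = A i * x ^ (r i)) :
    Function.Bijective P ↔
      ∀ i i' : ℕ, i < i' → i' < ℓ →
        (fun c : F => A i * c) '' {x : F | x ≠ 0 ∧ x ^ s = (γ ^ s) ^ ((i * r i) % ℓ)} ≠
        (fun c : F => A i' * c) '' {x : F | x ≠ 0 ∧ x ^ s = (γ ^ s) ^ ((i' * r i') % ℓ)} := by
  classical
  have hq2 : 2 ≤ q := by rw [← hq]; exact Fintype.one_lt_card
  have hsl : s * ℓ = q - 1 := by rw [hs]; exact Nat.div_mul_cancel hℓ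
  have hs0 : s ≠ 0 := by intro h; rw [h, zero_mul] at hsl; omega
  have hspos : 0 < s := Nat.pos_of_ne_zero hs0
  have hγ1 : γ ^ (q - 1) = 1 := by
    rw [← hq]; exact FiniteField.pow_card_sub_one_eq_one γ hγ0
  -- order of γ is q - 1
  set u : Fˣ := Units.mk0 γ hγ0 with hu
  have huval : (u : F) = γ := rfl
  have huord : orderOf u = q - 1 := by
    have hall : ∀ v : Fˣ, v ∈ Subgroup.zpowers u := by
      intro v
      obtain ⟨k, hk⟩ := hγ v.val (Units.ne_zero v)
      refine ⟨(k : ℤ), ?_⟩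
      show u ^ (k : ℤ) = v
      rw [zpow_natCast]
      exact Units.ext (by rw [Units.val_pow_eq_pow_val, huval, hk])
    rw [orderOf_eq_card_of_forall_mem_zpowers hall, Nat.card_eq_fintype_card,
      Fintype.card_units, hq]
  -- injectivity of powers of ζ = γ^s below ℓ
  have hinj_idx : ∀ i i' : ℕ, i < ℓ → i' < ℓ → (γ ^ s) ^ i = (γ ^ s) ^ i' → i = i' := by
    intro i i' hi hi' h
    have hU : u ^ (s * i) = u ^ (s * i') := by
      ext
      rw [Units.val_pow_eq_pow_val, Units.val_pow_eq_pow_val, huval, pow_mul, pow_mul, h]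
    rw [pow_eq_pow_iff_modEq, huord, ← hsl] at hU
    have h2 : s * (i % ℓ) = s * (i' % ℓ) := by
      have := hU
      unfold Nat.ModEq at this
      rwa [Nat.mul_mod_mul_left, Nat.mul_mod_mul_left] at this
    have := Nat.eq_of_mul_eq_mul_left hspos h2
    rwa [Nat.mod_eq_of_lt hi, Nat.mod_eq_of_lt hi'] at this
  have hzl : (γ ^ s) ^ ℓ = 1 := by rw [← pow_mul, hsl, hγ1]
  have hzmod : ∀ m : ℕ, (γ ^ s) ^ m = (γ ^ s) ^ (m % ℓ) := by
    intro m
    conv_lhs => rw [← Nat.mod_add_div m ℓ]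
    rw [pow_add, pow_mul, hzl, one_pow, mul_one]
  -- every nonzero element lies in some coset
  have hmemC : ∀ x : F, x ≠ 0 → ∃ i, i < ℓ ∧ x ^ s = (γ ^ s) ^ i := by
    intro x hx
    obtain ⟨k, hk⟩ := hγ x hx
    refine ⟨k % ℓ, Nat.mod_lt _ hℓpos, ?_⟩
    rw [← hk, ← pow_mul, mul_comm, pow_mul, hzmod]
  -- images of cosets under P
  have hpowmem : ∀ i : ℕ, ∀ x : F, x ≠ 0 → x ^ s = (γ ^ s) ^ i →
      (x ^ r i ≠ 0 ∧ (x ^ r i) ^ s = (γ ^ s) ^ ((i * r i) % ℓ)) := by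
    intro i x hx hxs
    refine ⟨pow_ne_zero _ hx, ?_⟩
    rw [← pow_mul, mul_comm, pow_mul, hxs, ← pow_mul, hzmod]
  have hO : ∀ i, i < ℓ → ∀ x : F, x ≠ 0 → x ^ s = (γ ^ s) ^ i →
      P x ∈ (fun c : F => A i * c) '' {y : F | y ≠ 0 ∧ y ^ s = (γ ^ s) ^ ((i * r i) % ℓ)} := by
    intro i hi x hx hxs
    rw [hP i hi x hx hxs]
    exact ⟨x ^ r i, hpowmem i x hx hxs, rfl⟩
  -- coset subset lemma
  have hco : ∀ (B B' : F), B' ≠ 0 → ∀ a b : ℕ, ∀ c c' : F,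
      c ≠ 0 → c ^ s = (γ ^ s) ^ a → c' ≠ 0 → c' ^ s = (γ ^ s) ^ b → B * c = B' * c' →
      (fun t : F => B * t) '' {x : F | x ≠ 0 ∧ x ^ s = (γ ^ s) ^ a} ⊆
      (fun t : F => B' * t) '' {x : F | x ≠ 0 ∧ x ^ s = (γ ^ s) ^ b} := by
    intro B B' hB' a b c c' hc0 hcs hc'0 hc's hcc
    rintro z ⟨d, ⟨hd0, hds⟩, rfl⟩
    refine ⟨c' * (d / c), ⟨mul_ne_zero hc'0 (div_ne_zero hd0 hc0), ?_⟩, ?_⟩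
    · rw [mul_pow, div_pow, hc's, hds, hcs, div_self (by
        exact pow_ne_zero _ (pow_ne_zero _ hγ0)), mul_one]
    · show B' * (c' * (d / c)) = B * d
      field_simp
      linear_combination hcc.symm
  -- cardinality comparison between cosets
  have hcardle : ∀ a b : ℕ,
      Set.ncard {x : F | x ≠ 0 ∧ x ^ s = (γ ^ s) ^ a} ≤
      Set.ncard {x : F | x ≠ 0 ∧ x ^ s = (γ ^ s) ^ b} := by
    intro a b
    have ht0 : (γ ^ b * (γ ^ a)⁻¹ : F) ≠ 0 :=
      mul_ne_zero (pow_ne_zero _ hγ0) (inv_ne_zero (pow_ne_zero _ hγ0))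
    refine Set.ncard_le_ncard_of_injOn (fun x => γ ^ b * (γ ^ a)⁻¹ * x) ?_ ?_ (Set.toFinite _)
    · rintro x ⟨hx0, hxs⟩
      refine ⟨mul_ne_zero ht0 hx0, ?_⟩
      rw [mul_pow, mul_pow, inv_pow, hxs, pow_right_comm γ b s, pow_right_comm γ a s,
        mul_assoc, inv_mul_cancel₀ (pow_ne_zero _ (pow_ne_zero _ hγ0)), mul_one]
    · exact (mul_right_injective₀ ht0).injOn
  have hcardeq : ∀ a b : ℕ,
      Set.ncard {x : F | x ≠ 0 ∧ x ^ s = (γ ^ s) ^ a} =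
      Set.ncard {x : F | x ≠ 0 ∧ x ^ s = (γ ^ s) ^ b} :=
    fun a b => le_antisymm (hcardle a b) (hcardle b a)
  constructor
  · -- bijective → cosets distinct
    intro hbij i i' hii hi' heq
    have hi : i < ℓ := lt_trans hii hi'
    set Ci : Set F := {x : F | x ≠ 0 ∧ x ^ s = (γ ^ s) ^ i} with hCi
    set Ci' : Set F := {x : F | x ≠ 0 ∧ x ^ s = (γ ^ s) ^ i'} with hCi'
    have hdisj : Disjoint Ci Ci' := by
      rw [Set.disjoint_left]
      rintro x ⟨hx0, hxa⟩ ⟨_, hxb⟩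
      exact absurd (hinj_idx i i' hi hi' (hxa ▸ hxb)) (Nat.ne_of_lt hii)
    have hsub : ∀ x ∈ Ci ∪ Ci',
        P x ∈ (fun c : F => A i * c) '' {y : F | y ≠ 0 ∧ y ^ s = (γ ^ s) ^ ((i * r i) % ℓ)} := by
      rintro x (⟨hx0, hxs⟩ | ⟨hx0, hxs⟩)
      · exact hO i hi x hx0 hxs
      · rw [heq]; exact hO i' hi' x hx0 hxs
    have h1 : (Ci ∪ Ci').ncard ≤
        Set.ncard ((fun c : F => A i * c) '' {y : F | y ≠ 0 ∧ y ^ s = (γ ^ s) ^ ((i * r i) % ℓ)}) :=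
      Set.ncard_le_ncard_of_injOn P hsub hbij.injective.injOn (Set.toFinite _)
    have h2 : Set.ncard ((fun c : F => A i * c) ''
        {y : F | y ≠ 0 ∧ y ^ s = (γ ^ s) ^ ((i * r i) % ℓ)}) =
        Set.ncard {y : F | y ≠ 0 ∧ y ^ s = (γ ^ s) ^ ((i * r i) % ℓ)} :=
      Set.ncard_image_of_injective _ (mul_right_injective₀ (hA i hi))
    have h3 : (Ci ∪ Ci').ncard = Ci.ncard + Ci'.ncard :=
      Set.ncard_union_eq hdisj (Set.toFinite _) (Set.toFinite _)
    have h4 : Set.ncard {y : F | y ≠ 0 ∧ y ^ s = (γ ^ s) ^ ((i * r i) % ℓ)} = Ci.ncard :=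
      hcardeq _ _
    have h5 : Ci'.ncard = Ci.ncard := hcardeq _ _
    have h6 : 0 < Ci.ncard := by
      rw [Set.ncard_pos (Set.toFinite _)]
      exact ⟨γ ^ i, pow_ne_zero _ hγ0, by rw [← pow_mul, mul_comm, pow_mul]⟩
    omega
  · -- cosets distinct → bijective
    intro hdist
    rw [← Finite.injective_iff_bijective]
    intro x y hxy
    by_cases hx : x = 0
    · by_cases hy : y = 0
      · rw [hx, hy]
      · exfalso
        obtain ⟨j, hj, hys⟩ := hmemC y hy
        rw [hx, hP0, hP j hj y hy hys] at hxy
        exact mul_ne_zero (hA j hj) (pow_ne_zero _ hy) hxy.symm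
    · by_cases hy : y = 0
      · exfalso
        obtain ⟨j, hj, hxs⟩ := hmemC x hx
        rw [hy, hP0, hP j hj x hx hxs] at hxy
        exact mul_ne_zero (hA j hj) (pow_ne_zero _ hx) hxy
      · obtain ⟨i, hi, hxs⟩ := hmemC x hx
        obtain ⟨j, hj, hys⟩ := hmemC y hy
        have hmul : A i * x ^ r i = A j * y ^ r j := by
          rw [← hP i hi x hx hxs, ← hP j hj y hy hys]; exact hxy
        obtain ⟨hxr0, hxrs⟩ := hpowmem i x hx hxs
        obtain ⟨hyr0, hyrs⟩ := hpowmem j y hy hys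
        rcases lt_trichotomy i j with hij | hij | hij
        · exact absurd (Set.Subset.antisymm
            (hco (A i) (A j) (hA j hj) _ _ _ _ hxr0 hxrs hyr0 hyrs hmul)
            (hco (A j) (A i) (hA i hi) _ _ _ _ hyr0 hyrs hxr0 hxrs hmul.symm))
            (hdist i j hij hj)
        · subst hij
          have hr_eq : x ^ r i = y ^ r i := mul_left_cancel₀ (hA i hi) hmul
          have hz1 : (x / y) ^ r i = 1 := by
            rw [div_pow, hr_eq, div_self (pow_ne_zero _ hy)]
          have hz2 : (x / y) ^ s = 1 := by
            rw [div_pow, hxs, hys, div_self (pow_ne_zero _ (pow_ne_zero _ hγ0))]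
          have hdvd : orderOf (x / y) ∣ Nat.gcd (r i) s :=
            Nat.dvd_gcd (orderOf_dvd_of_pow_eq_one hz1) (orderOf_dvd_of_pow_eq_one hz2)
          rw [hgcd i hi, Nat.dvd_one, orderOf_eq_one_iff] at hdvd
          exact div_eq_one_iff_eq hy |>.mp hdvd
        · exact absurd (Set.Subset.antisymm
            (hco (A j) (A i) (hA i hi) _ _ _ _ hyr0 hyrs hxr0 hxrs hmul.symm)
            (hco (A i) (A j) (hA j hj) _ _ _ _ hxr0 hxrs hyr0 hyrs hmul))
            (hdist j i hij hi)
end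

section
/- Let q be an odd prime power, s=(q-1)/2, and let C_0 be the set of nonzero squares and C_1 the set of nonsquares in F_q. Let r_0, r_1 be positive integers and f_0, f_1 ∈ F_q[x]. Define f(0)=0, f(x)=x^{r_0} f_0(x^{(q-1)/2}) for x ∈ C_0, and f(x)=x^{r_1} f_1(x^{(q-1)/2}) for x ∈ C_1. Then f is a bijection of F_q if and only if gcd(r_0,(q-1)/2)=gcd(r_1,(q-1)/2)=1 and η(f_0(1)·f_1(-1)) = (-1)^{r_1+1}, where η is the quadratic character of F_q. -/
lemma aux_eq_one_of_pows {F : Type*} [Field F] {z : F} (hz : z ≠ 0) {r s : ℕ}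
    (h : Nat.gcd r s = 1) (h1 : z ^ r = 1) (h2 : z ^ s = 1) : z = 1 := by
  have hb := Nat.gcd_eq_gcd_ab r s
  rw [h] at hb
  have h1' : z ^ (1 : ℤ) = 1 := by
    rw [show ((1:ℕ) : ℤ) = 1 from rfl] at hb
    rw [hb, zpow_add₀ hz, zpow_mul, zpow_mul]
    norm_cast
    rw [h1, h2, one_zpow, one_zpow, one_mul]
  simpa using h1'

lemma aux_not_sq_mul {F : Type*} [Field F] {w z : F} (hz : z ≠ 0) (hzs : IsSquare z)
    (hw : ¬ IsSquare w) : ¬ IsSquare (w * z) := by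
  intro ⟨t, ht⟩
  obtain ⟨u, hu⟩ := hzs
  apply hw
  have hu0 : u ≠ 0 := by rintro rfl; simp at hu; exact hz hu
  refine ⟨t * u⁻¹, ?_⟩
  have : w * z * (u * u)⁻¹ = w := by rw [← hu]; field_simp
  rw [← this, ht]
  field_simp

open scoped Classical in
/-- The quadratic character: 0 at 0, 1 at nonzero squares, -1 at nonsquares. -/
noncomputable def quadChar {F : Type*} [Field F] (a : F) : ℤ :=
  if a = 0 then 0 else if IsSquare a then 1 else -1

theorem stmt_2 {F : Type*} [Field F] [Fintype F] (q : ℕ)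
    (hq : Fintype.card F = q) (hodd : Odd q)
    (r₀ r₁ : ℕ) (hr₀ : 0 < r₀) (hr₁ : 0 < r₁)
    (f₀ f₁ : Polynomial F)
    (f : F → F) (hf0 : f 0 = 0)
    (hfsq : ∀ x : F, x ≠ 0 → IsSquare x → f x = x ^ r₀ * f₀.eval (x ^ ((q - 1) / 2)))
    (hfns : ∀ x : F, ¬ IsSquare x → f x = x ^ r₁ * f₁.eval (x ^ ((q - 1) / 2))) :
    Function.Bijective f ↔
      Nat.gcd r₀ ((q - 1) / 2) = 1 ∧ Nat.gcd r₁ ((q - 1) / 2) = 1 ∧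
        quadChar (f₀.eval 1 * f₁.eval (-1)) = (-1) ^ (r₁ + 1) := by
  classical
  obtain ⟨k, hk⟩ := hodd
  set s := (q - 1) / 2 with hs
  have hq2 : 2 ≤ q := by rw [← hq]; exact Fintype.one_lt_card
  have hsk : s = k := by omega
  have h2s : 2 * s = q - 1 := by omega
  have hs1 : 1 ≤ s := by omega
  have hchar : ringChar F ≠ 2 := by
    intro h
    have := FiniteField.even_card_of_char_two h
    omega
  have hcard2 : Fintype.card F / 2 = s := by rw [hq]; omega
  have hcard1 : Fintype.card F - 1 = 2 * s := by rw [hq]; omega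
  -- x^s values
  have hpow_sq : ∀ x : F, x ≠ 0 → IsSquare x → x ^ s = 1 := by
    intro x hx hsx
    have := (FiniteField.isSquare_iff hchar hx).mp hsx
    rwa [hcard2] at this
  have hpow_ns : ∀ x : F, ¬ IsSquare x → x ^ s = -1 := by
    intro x hsx
    have hx : x ≠ 0 := by rintro rfl; exact hsx ⟨0, by simp⟩
    rcases FiniteField.pow_dichotomy hchar hx with h | h
    · exact absurd ((FiniteField.isSquare_iff hchar hx).mpr h) hsx
    · rwa [hcard2] at h
  set c₀ := f₀.eval 1 with hc0def
  set c₁ := f₁.eval (-1) with hc1def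
  have hv0 : ∀ x : F, x ≠ 0 → IsSquare x → f x = x ^ r₀ * c₀ := by
    intro x hx hsx; rw [hfsq x hx hsx, hpow_sq x hx hsx]
  have hv1 : ∀ x : F, ¬ IsSquare x → f x = x ^ r₁ * c₁ := by
    intro x hsx; rw [hfns x hsx, hpow_ns x hsx]
  -- quadChar vs quadraticChar
  have hQC : ∀ a : F, quadChar a = quadraticChar F a := by
    intro a
    by_cases h : a = 0 <;> by_cases h2 : IsSquare a <;>
      simp [quadChar, quadraticChar_apply, quadraticCharFun, h, h2]
  set χ : MulChar F ℤ := quadraticChar F with hχdef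
  have hχsq : ∀ x : F, x ≠ 0 → IsSquare x → χ x = 1 := by
    intro x hx hsx; exact (quadraticChar_one_iff_isSquare hx).mpr hsx
  have hχns : ∀ x : F, ¬ IsSquare x → χ x = -1 := by
    intro x hsx; exact quadraticChar_neg_one_iff_not_isSquare.mpr hsx
  -- generator
  obtain ⟨ζ, hζ⟩ := IsCyclic.exists_generator (α := Fˣ)
  have hordζ : orderOf ζ = 2 * s := by
    rw [orderOf_eq_card_of_forall_mem_zpowers hζ, Nat.card_eq_fintype_card, Fintype.card_units, hcard1]
  have hζ0 : (ζ : F) ≠ 0 := Units.ne_zero ζ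
  have hζpow : ∀ n : ℕ, (ζ : F) ^ n = 1 → (2 * s) ∣ n := by
    intro n hn
    have : ζ ^ n = 1 := Units.ext (by push_cast; exact hn)
    rw [← hordζ]; exact orderOf_dvd_of_pow_eq_one this
  have hζns : ¬ IsSquare (ζ : F) := by
    intro hsq
    have := hζpow s (hpow_sq _ hζ0 hsq)
    have := Nat.le_of_dvd (by omega) this
    omega
  -- non-coprime gives a nontrivial square z with z^r = 1
  have hbad : ∀ r : ℕ, 0 < r → Nat.gcd r s ≠ 1 →
      ∃ z : F, z ≠ 0 ∧ z ≠ 1 ∧ IsSquare z ∧ z ^ r = 1 := by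
    intro r hr hgcd
    obtain ⟨p, hp, hpd⟩ := Nat.exists_prime_and_dvd hgcd
    have hpr : p ∣ r := hpd.trans (Nat.gcd_dvd_left r s)
    have hps : p ∣ s := hpd.trans (Nat.gcd_dvd_right r s)
    have hp2 : 2 ≤ p := hp.two_le
    obtain ⟨m, hm⟩ := hps
    obtain ⟨t, ht⟩ := hpr
    have hm1 : 1 ≤ m := by
      rcases Nat.eq_zero_or_pos m with h | h
      · subst h; simp at hm; omega
      · exact h
    refine ⟨(ζ : F) ^ (2 * m), pow_ne_zero _ hζ0, ?_, ⟨(ζ : F) ^ m, by rw [← pow_add]; ring_nf⟩, ?_⟩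
    · intro h
      have := Nat.le_of_dvd (by omega) (hζpow _ h)
      have hms : 2 * m ≤ s := by nlinarith
      omega
    · have h1 : (ζ : F) ^ (2 * s) = 1 := by
        have := FiniteField.pow_card_sub_one_eq_one (ζ : F) hζ0
        rwa [hcard1] at this
      calc ((ζ : F) ^ (2 * m)) ^ r = ((ζ : F) ^ (2 * s)) ^ t := by
            rw [← pow_mul, ← pow_mul]; congr 1; rw [ht, hm]; ring
        _ = 1 := by rw [h1, one_pow]
  -- χ of values of f
  have hχf0 : ∀ x : F, x ≠ 0 → IsSquare x → χ (f x) = χ c₀ := by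
    intro x hx hsx
    rw [hv0 x hx hsx, map_mul, map_pow, hχsq x hx hsx, one_pow, one_mul]
  have hχf1 : ∀ x : F, ¬ IsSquare x → χ (f x) = (-1) ^ r₁ * χ c₁ := by
    intro x hsx
    rw [hv1 x hsx, map_mul, map_pow, hχns x hsx]
  have hpow11 : ((-1 : ℤ)) ^ r₁ = 1 ∨ ((-1 : ℤ)) ^ r₁ = -1 := by
    rcases Nat.even_or_odd r₁ with h | h
    · left; exact h.neg_one_pow
    · right; exact h.neg_one_pow
  constructor
  · intro hbij
    have hinj := hbij.injective
    have hc₀ : c₀ ≠ 0 := by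
      intro h
      have h1 : f 1 = f 0 := by
        rw [hv0 1 one_ne_zero IsSquare.one, hf0, h, mul_zero]
      exact one_ne_zero (hinj h1)
    have hc₁ : c₁ ≠ 0 := by
      intro h
      have h1 : f (ζ : F) = f 0 := by
        rw [hv1 _ hζns, hf0, h, mul_zero]
      exact hζ0 (hinj h1)
    have hg₀ : Nat.gcd r₀ s = 1 := by
      by_contra h
      obtain ⟨z, hz0, hz1, hzs, hzr⟩ := hbad r₀ hr₀ h
      have : f z = f 1 := by
        rw [hv0 z hz0 hzs, hv0 1 one_ne_zero IsSquare.one, hzr, one_pow]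
      exact hz1 (hinj this)
    have hg₁ : Nat.gcd r₁ s = 1 := by
      by_contra h
      obtain ⟨z, hz0, hz1, hzs, hzr⟩ := hbad r₁ hr₁ h
      have hns : ¬ IsSquare ((ζ : F) * z) := aux_not_sq_mul hz0 hzs hζns
      have : f ((ζ : F) * z) = f (ζ : F) := by
        rw [hv1 _ hns, hv1 _ hζns, mul_pow, hzr, mul_one]
      have := hinj this
      apply hz1
      field_simp at this
      exact this
    refine ⟨hg₀, hg₁, ?_⟩
    rw [hQC, map_mul]
    by_contra hne
    have hd0 := quadraticChar_dichotomy hc₀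
    have hd1 := quadraticChar_dichotomy hc₁
    rw [← hχdef] at hd0 hd1
    -- from hne: χ c₀ = (-1)^r₁ * χ c₁
    have heq : χ c₀ = (-1) ^ r₁ * χ c₁ := by
      rw [pow_succ] at hne
      rcases hpow11 with h | h <;> rcases hd0 with h0 | h0 <;> rcases hd1 with h1 | h1 <;>
        rw [h, h0, h1] at hne ⊢ <;> omega
    -- pick y with χ y = - χ c₀
    have hpick : ∃ y : F, y ≠ 0 ∧ χ y = - χ c₀ := by
      rcases hd0 with h0 | h0
      · exact ⟨(ζ : F), hζ0, by rw [hχns _ hζns, h0]⟩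
      · exact ⟨1, one_ne_zero, by rw [map_one, h0, neg_neg]⟩
    obtain ⟨y, hy0, hyχ⟩ := hpick
    obtain ⟨x, hx⟩ := hbij.surjective y
    have hx0 : x ≠ 0 := by rintro rfl; rw [hf0] at hx; exact hy0 hx.symm
    have : χ y = χ c₀ := by
      by_cases hsx : IsSquare x
      · rw [← hx]; exact hχf0 x hx0 hsx
      · rw [← hx, hχf1 x hsx, ← heq]
    rw [hyχ] at this
    rcases hd0 with h0 | h0 <;> rw [h0] at this <;> omega
  · rintro ⟨hg₀, hg₁, hc⟩
    rw [hQC] at hc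
    have hprod : c₀ * c₁ ≠ 0 := by
      intro h
      rw [h] at hc
      have : ((-1 : ℤ)) ^ (r₁ + 1) = 0 := by rw [← hc, hχdef, quadraticChar_zero]
      rcases Nat.even_or_odd (r₁ + 1) with hp | hp
      · rw [hp.neg_one_pow] at this; omega
      · rw [hp.neg_one_pow] at this; omega
    have hc₀ : c₀ ≠ 0 := left_ne_zero_of_mul hprod
    have hc₁ : c₁ ≠ 0 := right_ne_zero_of_mul hprod
    rw [map_mul] at hc
    have hd1 := quadraticChar_dichotomy hc₁
    rw [← hχdef] at hd1
    have hfne0 : ∀ x : F, x ≠ 0 → f x ≠ 0 := by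
      intro x hx
      by_cases hsx : IsSquare x
      · rw [hv0 x hx hsx]; exact mul_ne_zero (pow_ne_zero _ hx) hc₀
      · rw [hv1 x hsx]; exact mul_ne_zero (pow_ne_zero _ hx) hc₁
    have hinj : Function.Injective f := by
      intro x y hxy
      by_cases hx : x = 0
      · subst hx
        by_contra hne
        exact hfne0 y (fun h => hne h.symm) (by rw [← hxy, hf0])
      by_cases hy : y = 0
      · subst hy
        exact absurd (by rw [hxy, hf0]) (hfne0 x hx)
      by_cases hsx : IsSquare x <;> by_cases hsy : IsSquare y
      · -- both squares
        rw [hv0 x hx hsx, hv0 y hy hsy] at hxy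
        have hpow : x ^ r₀ = y ^ r₀ := mul_right_cancel₀ hc₀ hxy
        have hz0 : x * y⁻¹ ≠ 0 := mul_ne_zero hx (inv_ne_zero hy)
        have h1 : (x * y⁻¹) ^ r₀ = 1 := by
          rw [mul_pow, inv_pow, hpow, mul_inv_cancel₀ (pow_ne_zero _ hy)]
        have h2 : (x * y⁻¹) ^ s = 1 := by
          rw [mul_pow, inv_pow, hpow_sq x hx hsx, hpow_sq y hy hsy, one_mul, inv_one]
        have := aux_eq_one_of_pows hz0 hg₀ h1 h2
        field_simp at this
        exact this
      · -- x square, y not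
        exfalso
        have e1 : χ (f x) = χ c₀ := hχf0 x hx hsx
        have e2 : χ (f y) = (-1) ^ r₁ * χ c₁ := hχf1 y hsy
        rw [hxy, e2] at e1
        rw [pow_succ] at hc
        rcases hpow11 with h | h <;> rcases hd1 with h1 | h1 <;>
          rw [h, h1] at e1 hc <;> omega
      · -- y square, x not
        exfalso
        have e1 : χ (f y) = χ c₀ := hχf0 y hy hsy
        have e2 : χ (f x) = (-1) ^ r₁ * χ c₁ := hχf1 x hsx
        rw [← hxy, e2] at e1
        rw [pow_succ] at hc
        rcases hpow11 with h | h <;> rcases hd1 with h1 | h1 <;>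
          rw [h, h1] at e1 hc <;> omega
      · -- both nonsquares
        rw [hv1 x hsx, hv1 y hsy] at hxy
        have hpow : x ^ r₁ = y ^ r₁ := mul_right_cancel₀ hc₁ hxy
        have hz0 : x * y⁻¹ ≠ 0 := mul_ne_zero hx (inv_ne_zero hy)
        have h1 : (x * y⁻¹) ^ r₁ = 1 := by
          rw [mul_pow, inv_pow, hpow, mul_inv_cancel₀ (pow_ne_zero _ hy)]
        have h2 : (x * y⁻¹) ^ s = 1 := by
          rw [mul_pow, inv_pow, hpow_ns x hsx, hpow_ns y hsy]
          norm_num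
        have := aux_eq_one_of_pows hz0 hg₁ h1 h2
        field_simp at this
        exact this
    exact Finite.injective_iff_bijective.mp hinj
end

section
/- Let p be an odd prime, n, t, r positive integers, and q = p^n. Then the polynomial f(x) = (1 - x^t)·x^{(q-1)/2 + r} - x^r - x^{t+r} is a permutation polynomial of F_q if and only if gcd(r, q-1) = 1 and gcd(t+r, (q-1)/2) = 1. -/
private lemma sq_cases' {F : Type*} [Field F] {a : F} (h : a ^ 2 = 1) : a = 1 ∨ a = -1 := by
  have h' : (a - 1) * (a + 1) = 0 := by linear_combination h
  rcases mul_eq_zero.mp h' with h'' | h''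
  · exact Or.inl (sub_eq_zero.mp h'')
  · exact Or.inr (eq_neg_of_add_eq_zero_left h'')

private lemma cancel_pow' {F : Type*} [Field F] {x y : F} (hy : y ≠ 0) {k1 k2 : ℕ}
    (h1 : x ^ k1 = y ^ k1) (h2 : x ^ k2 = y ^ k2) (hgcd : Nat.gcd k1 k2 = 1) : x = y := by
  have ha1 : (x / y) ^ k1 = 1 := by rw [div_pow, h1, div_self (pow_ne_zero _ hy)]
  have ha2 : (x / y) ^ k2 = 1 := by rw [div_pow, h2, div_self (pow_ne_zero _ hy)]
  have hd : orderOf (x / y) ∣ Nat.gcd k1 k2 :=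
    Nat.dvd_gcd (orderOf_dvd_of_pow_eq_one ha1) (orderOf_dvd_of_pow_eq_one ha2)
  rw [hgcd, Nat.dvd_one] at hd
  have := orderOf_eq_one_iff.mp hd
  exact (div_eq_one_iff_eq hy).mp this

theorem stmt_3 {F : Type*} [Field F] [Fintype F] (p n t r q : ℕ)
    (hp : p.Prime) (hpodd : Odd p) (hn : 0 < n) (ht : 0 < t) (hr : 0 < r)
    (hq : q = p ^ n) (hcard : Fintype.card F = q) :
    Function.Bijective
        (fun x : F => (1 - x ^ t) * x ^ ((q - 1) / 2 + r) - x ^ r - x ^ (t + r)) ↔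
      Nat.gcd r (q - 1) = 1 ∧ Nat.gcd (t + r) ((q - 1) / 2) = 1 := by
  classical
  have hqodd : Odd q := hq ▸ hpodd.pow
  have hq2 : 2 ∣ q - 1 := by obtain ⟨k, hk⟩ := hqodd; omega
  have hq3 : 3 ≤ q := by
    have hp3 : 3 ≤ p := by
      obtain ⟨k, hk⟩ := hpodd; have := hp.two_le; omega
    have hle : p ≤ p ^ n := Nat.le_self_pow hn.ne' p
    omega
  set m := (q - 1) / 2 with hm
  have h2m : 2 * m = q - 1 := by omega
  have hm1 : 1 ≤ m := by omega
  have hchar : (2 : F) ≠ 0 := by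
    intro h20
    have hq0 : ((q : ℕ) : F) = 0 := by rw [← hcard]; exact FiniteField.cast_card_eq_zero F
    have hdq : ringChar F ∣ q := (CharP.cast_eq_zero_iff F (ringChar F) q).mp hq0
    have hd2 : ringChar F ∣ 2 := (CharP.cast_eq_zero_iff F (ringChar F) 2).mp (by
      exact_mod_cast h20)
    rcases (Nat.dvd_prime Nat.prime_two).mp hd2 with h1 | h1
    · have : ((1 : ℕ) : F) = 0 := (CharP.cast_eq_zero_iff F (ringChar F) 1).mpr (by rw [h1])
      simp at this
    · rw [h1] at hdq
      obtain ⟨k, hk⟩ := hqodd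
      omega
  have hne : (-1 : F) ≠ 1 := by
    intro h
    have : (2 : F) = 0 := by linear_combination -h
    exact hchar this
  have hsq : ∀ x : F, x ≠ 0 → x ^ m = 1 ∨ x ^ m = -1 := by
    intro x hx
    apply sq_cases'
    rw [← pow_mul, show m * 2 = q - 1 by omega]
    have := FiniteField.pow_card_sub_one_eq_one x hx
    rwa [hcard] at this
  set f := fun x : F => (1 - x ^ t) * x ^ (m + r) - x ^ r - x ^ (t + r) with hfdef
  have hf1 : ∀ x : F, x ^ m = 1 → f x = -2 * x ^ (t + r) := by
    intro x hx
    simp only [hfdef]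
    rw [pow_add x m r, pow_add x t r, hx]
    ring
  have hf2 : ∀ x : F, x ^ m = -1 → f x = -2 * x ^ r := by
    intro x hx
    simp only [hfdef]
    rw [pow_add x m r, pow_add x t r, hx]
    ring
  have hf0 : f 0 = 0 := by
    simp only [hfdef]
    rw [zero_pow (by omega : m + r ≠ 0), zero_pow hr.ne', zero_pow ht.ne',
      zero_pow (by omega : t + r ≠ 0)]
    ring
  have hfne : ∀ x : F, x ≠ 0 → f x ≠ 0 := by
    intro x hx
    rcases hsq x hx with h | h
    · rw [hf1 x h]; exact mul_ne_zero (neg_ne_zero.mpr hchar) (pow_ne_zero _ hx)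
    · rw [hf2 x h]; exact mul_ne_zero (neg_ne_zero.mpr hchar) (pow_ne_zero _ hx)
  constructor
  · intro hbij
    have hinj := hbij.injective
    obtain ⟨g, hg⟩ := IsCyclic.exists_generator (α := Fˣ)
    have hgord : orderOf g = q - 1 := by
      rw [orderOf_eq_card_of_forall_mem_zpowers hg, Nat.card_eq_fintype_card,
        Fintype.card_units, hcard]
    have hx0ne : (g : F) ≠ 0 := Units.ne_zero g
    have hx0 : ((g : F)) ^ m = -1 := by
      rcases hsq (g : F) hx0ne with h | h
      · exfalso
        have hgm : (g ^ m : Fˣ) = 1 := by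
          ext
          rwa [Units.val_pow_eq_pow_val, Units.val_one]
        have hdvd := orderOf_dvd_of_pow_eq_one hgm
        rw [hgord] at hdvd
        have := Nat.le_of_dvd hm1 hdvd
        omega
      · exact h
    set x₀ := (g : F)
    constructor
    · by_contra hgcd
      obtain ⟨ℓ, hℓp, hℓd⟩ := Nat.exists_prime_and_dvd hgcd
      have hℓr : ℓ ∣ r := hℓd.trans (Nat.gcd_dvd_left _ _)
      have hℓq : ℓ ∣ q - 1 := hℓd.trans (Nat.gcd_dvd_right _ _)
      by_cases hℓ2 : ℓ = 2
      · have h2r : 2 ∣ r := hℓ2 ▸ hℓr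
        have hre : (-1 : F) ^ r = 1 := Even.neg_one_pow (by obtain ⟨k, hk⟩ := h2r; exact ⟨k, by omega⟩)
        rcases hsq (-1 : F) (neg_ne_zero.mpr one_ne_zero) with hn1 | hn1
        · have h1 : f (-x₀) = f x₀ := by
            rw [hf2 (-x₀) (by rw [neg_eq_neg_one_mul, mul_pow, hn1, one_mul, hx0]),
              hf2 x₀ hx0, neg_eq_neg_one_mul x₀, mul_pow, hre, one_mul]
          have heq := hinj h1
          have h2 : (2 : F) * x₀ = 0 := by linear_combination -heq
          rcases mul_eq_zero.mp h2 with h | h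
          · exact hchar h
          · exact hx0ne h
        · have e1 : f 1 = -2 := by rw [hf1 1 (one_pow m)]; simp
          have e2 : f (-1) = -2 := by rw [hf2 (-1) hn1, hre]; ring
          exact hne (hinj (e2.trans e1.symm))
      · have hc : Nat.Coprime ℓ 2 := (Nat.coprime_primes hℓp Nat.prime_two).mpr hℓ2
        have hℓm : ℓ ∣ m := by
          rw [← h2m] at hℓq
          exact hc.dvd_of_dvd_mul_left hℓq
        have hℓcard : ℓ ∣ Fintype.card Fˣ := by
          rw [Fintype.card_units, hcard]; exact hℓq
        haveI := Fact.mk hℓp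
        obtain ⟨u, hu⟩ := exists_prime_orderOf_dvd_card ℓ hℓcard
        have hu1 : (u : F) ≠ 1 := by
          intro h
          have hu1' : u = 1 := Units.ext (by rwa [Units.val_one])
          rw [hu1'] at hu
          simp at hu
          exact hℓp.one_lt.ne' hu.symm
        have hpow : ∀ k : ℕ, ℓ ∣ k → (u : F) ^ k = 1 := by
          intro k hk
          have : u ^ k = 1 := orderOf_dvd_iff_pow_eq_one.mp (by rw [hu]; exact hk)
          calc (u : F) ^ k = ((u ^ k : Fˣ) : F) := by rw [Units.val_pow_eq_pow_val]
          _ = 1 := by rw [this, Units.val_one]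
        have hum : (u : F) ^ m = 1 := hpow m hℓm
        have hur : (u : F) ^ r = 1 := hpow r hℓr
        have h1 : f ((u : F) * x₀) = f x₀ := by
          rw [hf2 _ (by rw [mul_pow, hum, one_mul, hx0]), hf2 x₀ hx0, mul_pow, hur, one_mul]
        have h2 := hinj h1
        exact hu1 (mul_right_cancel₀ hx0ne (h2.trans (one_mul x₀).symm))
    · by_contra hgcd
      obtain ⟨ℓ, hℓp, hℓd⟩ := Nat.exists_prime_and_dvd hgcd
      have hℓtr : ℓ ∣ t + r := hℓd.trans (Nat.gcd_dvd_left _ _)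
      have hℓm : ℓ ∣ m := hℓd.trans (Nat.gcd_dvd_right _ _)
      have hℓcard : ℓ ∣ Fintype.card Fˣ := by
        rw [Fintype.card_units, hcard]
        exact hℓm.trans ⟨2, by omega⟩
      haveI := Fact.mk hℓp
      obtain ⟨u, hu⟩ := exists_prime_orderOf_dvd_card ℓ hℓcard
      have hu1 : (u : F) ≠ 1 := by
        intro h
        have hu1' : u = 1 := Units.ext (by rwa [Units.val_one])
        rw [hu1'] at hu
        simp at hu
        exact hℓp.one_lt.ne' hu.symm
      have hpow : ∀ k : ℕ, ℓ ∣ k → (u : F) ^ k = 1 := by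
        intro k hk
        have : u ^ k = 1 := orderOf_dvd_iff_pow_eq_one.mp (by rw [hu]; exact hk)
        calc (u : F) ^ k = ((u ^ k : Fˣ) : F) := by rw [Units.val_pow_eq_pow_val]
        _ = 1 := by rw [this, Units.val_one]
      have h1 : f (u : F) = f 1 := by
        rw [hf1 _ (hpow m hℓm), hf1 1 (one_pow m), hpow (t + r) hℓtr, one_pow]
      exact hu1 (hinj h1)
  · rintro ⟨hg1, hg2⟩
    have hrodd : (-1 : F) ^ r = -1 := by
      have h2r : ¬ (2 ∣ r) := by
        intro h
        have : 2 ∣ Nat.gcd r (q - 1) := Nat.dvd_gcd h hq2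
        omega
      exact Odd.neg_one_pow (Nat.odd_iff.mpr (by omega))
    rw [← Finite.injective_iff_bijective]
    intro x y hxy
    by_cases hx : x = 0
    · by_cases hy : y = 0
      · rw [hx, hy]
      · exact absurd (show f y = 0 by rw [← hxy, hx, hf0]) (hfne y hy)
    · by_cases hy : y = 0
      · exact absurd (show f x = 0 by rw [hxy, hy, hf0]) (hfne x hx)
      rcases hsq x hx with h1 | h1 <;> rcases hsq y hy with h2 | h2
      · rw [hf1 x h1, hf1 y h2] at hxy
        have e : x ^ (t + r) = y ^ (t + r) := mul_left_cancel₀ (neg_ne_zero.mpr hchar) hxy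
        exact cancel_pow' hy e (h1.trans h2.symm) hg2
      · rw [hf1 x h1, hf2 y h2] at hxy
        have e : x ^ (t + r) = y ^ r := mul_left_cancel₀ (neg_ne_zero.mpr hchar) hxy
        exfalso
        apply hne
        calc (-1 : F) = (y ^ m) ^ r := by rw [h2, hrodd]
        _ = (y ^ r) ^ m := by rw [← pow_mul, ← pow_mul, mul_comm]
        _ = (x ^ (t + r)) ^ m := by rw [e]
        _ = (x ^ m) ^ (t + r) := by rw [← pow_mul, ← pow_mul, mul_comm]
        _ = 1 := by rw [h1, one_pow]
      · rw [hf2 x h1, hf1 y h2] at hxy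
        have e : x ^ r = y ^ (t + r) := mul_left_cancel₀ (neg_ne_zero.mpr hchar) hxy
        exfalso
        apply hne
        calc (-1 : F) = (x ^ m) ^ r := by rw [h1, hrodd]
        _ = (x ^ r) ^ m := by rw [← pow_mul, ← pow_mul, mul_comm]
        _ = (y ^ (t + r)) ^ m := by rw [e]
        _ = (y ^ m) ^ (t + r) := by rw [← pow_mul, ← pow_mul, mul_comm]
        _ = 1 := by rw [h2, one_pow]
      · rw [hf2 x h1, hf2 y h2] at hxy
        have e : x ^ r = y ^ r := mul_left_cancel₀ (neg_ne_zero.mpr hchar) hxy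
        have hgrm : Nat.gcd r m = 1 := by
          have hd : Nat.gcd r m ∣ Nat.gcd r (q - 1) :=
            Nat.dvd_gcd (Nat.gcd_dvd_left _ _) ((Nat.gcd_dvd_right r m).trans ⟨2, by omega⟩)
          rw [hg1] at hd
          exact Nat.dvd_one.mp hd
        exact cancel_pow' hy e (h1.trans h2.symm) hgrm
end

section
/- Let p be an odd prime, n, t, r positive integers, and q = p^n. If gcd(r, q-1)=1 and gcd(t+r, q-1)=1, then f(x) = (1 - x^t)·x^{(q-1)/2 + r} - x^r - x^{t+r} is a permutation polynomial of F_q. -/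
private lemma pow_inj_aux {F : Type*} [Field F] [Fintype F] {k : ℕ} (hk : 0 < k)
    (hco : Nat.Coprime (Nat.card Fˣ) k) : Function.Injective (fun x : F => x ^ k) := by
  intro a b hab
  simp only at hab
  rcases eq_or_ne a 0 with rfl | ha
  · rcases eq_or_ne b 0 with rfl | hb
    · rfl
    · exact absurd ((pow_eq_zero_iff hk.ne').mp (by simp [← hab, hk.ne'])).symm hb.symm
  · rcases eq_or_ne b 0 with rfl | hb
    · exact absurd ((pow_eq_zero_iff hk.ne').mp (by simp [hab, hk.ne'])) ha
    · have h := hco.pow_left_bijective.injective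
        (show (Units.mk0 a ha) ^ k = (Units.mk0 b hb) ^ k from Units.ext (by simpa using hab))
      simpa [Units.ext_iff] using h

theorem stmt_4 {F : Type*} [Field F] [Fintype F] (p n t r q : ℕ)
    (hp : p.Prime) (hpodd : Odd p) (hn : 0 < n) (ht : 0 < t) (hr : 0 < r)
    (hq : q = p ^ n) (hcard : Fintype.card F = q)
    (h1 : Nat.gcd r (q - 1) = 1) (h2 : Nat.gcd (t + r) (q - 1) = 1) :
    Function.Bijective
      (fun x : F => (1 - x ^ t) * x ^ ((q - 1) / 2 + r) - x ^ r - x ^ (t + r)) := by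
  classical
  have hqodd : Odd q := hq ▸ hpodd.pow
  have hq3 : 3 ≤ q := by
    have h1 : p ≤ p ^ n := Nat.le_self_pow hn.ne' p
    have hp3 : 3 ≤ p := by
      rcases hp.two_le.lt_or_eq with h | h
      · omega
      · exact absurd (h ▸ hpodd) (by decide)
    omega
  have hchar : ringChar F ≠ 2 := by
    intro h
    have := FiniteField.even_card_of_char_two h
    rw [hcard] at this
    rcases hqodd with ⟨k, hk⟩
    omega
  have h2ne : (2 : F) ≠ 0 := Ring.two_ne_zero hchar
  have hn2ne : (-2 : F) ≠ 0 := neg_ne_zero.mpr h2ne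
  set m := (q - 1) / 2 with hm
  have hdich : ∀ x : F, x ≠ 0 → x ^ m = 1 ∨ x ^ m = -1 := by
    intro x hx
    have h := FiniteField.pow_dichotomy hchar hx
    rcases hqodd with ⟨k, hk⟩
    rwa [hcard, show q / 2 = m by omega] at h
  have hcardU : Nat.card Fˣ = q - 1 := by
    rw [Nat.card_eq_fintype_card, Fintype.card_units, hcard]
  have hco1 : Nat.Coprime (Nat.card Fˣ) r := by rw [hcardU]; exact Nat.coprime_comm.mp h1
  have hco2 : Nat.Coprime (Nat.card Fˣ) (t + r) := by rw [hcardU]; exact Nat.coprime_comm.mp h2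
  have hrodd : Odd r := by
    rcases Nat.even_or_odd r with he | ho
    · exfalso
      have hd : 2 ∣ Nat.gcd r (q - 1) := Nat.dvd_gcd he.two_dvd (by rcases hqodd with ⟨k, hk⟩; omega)
      omega
    · exact ho
  set f : F → F := fun x => (1 - x ^ t) * x ^ (m + r) - x ^ r - x ^ (t + r) with hf
  have hf0 : f 0 = 0 := by
    simp [hf, zero_pow, hr.ne', (by omega : m + r ≠ 0), (by omega : t + r ≠ 0)]
  have hkey : ∀ x : F, x ≠ 0 →
      (x ^ m = 1 ∧ f x = -2 * x ^ (t + r)) ∨ (x ^ m = -1 ∧ f x = -2 * x ^ r) := by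
    intro x hx
    rcases hdich x hx with h | h
    · exact Or.inl ⟨h, by simp only [hf, pow_add, h, one_mul]; ring⟩
    · exact Or.inr ⟨h, by simp only [hf, pow_add, h]; ring⟩
  rw [← Finite.injective_iff_bijective]
  intro a b hab
  change f a = f b at hab
  have hne0 : ∀ x : F, x ≠ 0 → f x ≠ 0 := by
    intro x hx
    rcases hkey x hx with ⟨_, hfx⟩ | ⟨_, hfx⟩ <;> rw [hfx] <;>
      exact mul_ne_zero hn2ne (pow_ne_zero _ hx)
  rcases eq_or_ne a 0 with rfl | ha
  · rcases eq_or_ne b 0 with rfl | hb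
    · rfl
    · exact absurd (by rw [← hab, hf0]) (hne0 b hb)
  · rcases eq_or_ne b 0 with rfl | hb
    · exact absurd (by rw [hab, hf0]) (hne0 a ha)
    · have mixed : ∀ x y : F, x ≠ 0 → y ≠ 0 → x ^ m = 1 → y ^ m = -1 → f x ≠ f y := by
        intro x y hx hy hxm hym hfxy
        rcases hkey x hx with ⟨_, hfx⟩ | ⟨hc, _⟩
        swap
        · rw [hxm] at hc; exact h2ne (by linear_combination hc)
        rcases hkey y hy with ⟨hc, _⟩ | ⟨_, hfy⟩
        · rw [hym] at hc; exact h2ne (by linear_combination -hc)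
        have e1 : (f x) ^ m = (-2 : F) ^ m := by
          rw [hfx, mul_pow, ← pow_mul, mul_comm (t + r) m, pow_mul, hxm, one_pow, mul_one]
        have e2 : (f y) ^ m = -((-2 : F) ^ m) := by
          rw [hfy, mul_pow, ← pow_mul, mul_comm r m, pow_mul, hym, hrodd.neg_one_pow, mul_neg_one]
        have heq : (-2 : F) ^ m = -((-2 : F) ^ m) := by
          calc (-2 : F) ^ m = f x ^ m := e1.symm
            _ = f y ^ m := by rw [hfxy]
            _ = -((-2 : F) ^ m) := e2
        have h0 : (2 : F) * (-2 : F) ^ m = 0 := by linear_combination heq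
        exact pow_ne_zero m hn2ne ((mul_eq_zero.mp h0).resolve_left h2ne)
      rcases hkey a ha with ⟨ham, hfa⟩ | ⟨ham, hfa⟩ <;> rcases hkey b hb with ⟨hbm, hfb⟩ | ⟨hbm, hfb⟩
      · rw [hfa, hfb] at hab
        exact pow_inj_aux (by omega) hco2 (mul_left_cancel₀ hn2ne hab)
      · exact absurd hab (mixed a b ha hb ham hbm)
      · exact absurd hab.symm (mixed b a hb ha hbm ham)
      · rw [hfa, hfb] at hab
        exact pow_inj_aux hr hco1 (mul_left_cancel₀ hn2ne hab)
end

section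
/- Let p be an odd prime, n, t, r positive integers, q = p^n with q ≡ 3 (mod 4). If gcd(r, q-1)=1 and gcd(t+r, q-1)=2, then f(x) = (1 - x^t)·x^{(q-1)/2 + r} - x^r - x^{t+r} is a permutation polynomial of F_q. -/
theorem stmt_5 {F : Type*} [Field F] [Fintype F] (p n t r q : ℕ)
    (hp : p.Prime) (hpodd : Odd p) (hn : 0 < n) (ht : 0 < t) (hr : 0 < r)
    (hq : q = p ^ n) (hcard : Fintype.card F = q) (hq4 : q % 4 = 3)
    (h1 : Nat.gcd r (q - 1) = 1) (h2 : Nat.gcd (t + r) (q - 1) = 2) :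
    Function.Bijective
      (fun x : F => (1 - x ^ t) * x ^ ((q - 1) / 2 + r) - x ^ r - x ^ (t + r)) := by
  set e := (q - 1) / 2 with he
  have h2e : 2 * e = q - 1 := by omega
  have heodd : e % 2 = 1 := by omega
  have hchar : ringChar F ≠ 2 := by
    intro h
    have := FiniteField.even_card_of_char_two h
    omega
  have hF2 : (2 : F) ≠ 0 := Ring.two_ne_zero hchar
  have hn2 : (-2 : F) ≠ 0 := neg_ne_zero.mpr hF2
  have hpow : ∀ z : F, z ≠ 0 → z ^ (q - 1) = 1 := fun z hz => by
    rw [← hcard]; exact FiniteField.pow_card_sub_one_eq_one z hz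
  have hse : ∀ z : F, z ≠ 0 → z ^ e = 1 ∨ z ^ e = -1 := fun z hz => by
    have h : z ^ e * z ^ e = 1 := by
      rw [← pow_add, show e + e = q - 1 by omega]; exact hpow z hz
    exact mul_self_eq_one_iff.mp h
  have hgcd : ∀ u : F, u ≠ 0 → ∀ k, u ^ k = 1 → orderOf u ∣ Nat.gcd k (q - 1) :=
    fun u hu k hk =>
      Nat.dvd_gcd (orderOf_dvd_of_pow_eq_one hk) (orderOf_dvd_of_pow_eq_one (hpow u hu))
  have hrodd : Odd r := by
    rcases Nat.even_or_odd r with hev | hod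
    · exfalso
      have hd : 2 ∣ Nat.gcd r (q - 1) := Nat.dvd_gcd hev.two_dvd (by omega)
      omega
    · exact hod
  have hform1 : ∀ z : F, z ^ e = 1 →
      (1 - z ^ t) * z ^ (e + r) - z ^ r - z ^ (t + r) = -2 * (z ^ t * z ^ r) := by
    intro z hz
    rw [pow_add, pow_add, hz]; ring
  have hform2 : ∀ z : F, z ^ e = -1 →
      (1 - z ^ t) * z ^ (e + r) - z ^ r - z ^ (t + r) = -2 * z ^ r := by
    intro z hz
    rw [pow_add, pow_add, hz]; ring
  have hne0 : ∀ z : F, z ≠ 0 →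
      (1 - z ^ t) * z ^ (e + r) - z ^ r - z ^ (t + r) ≠ 0 := by
    intro z hz
    rcases hse z hz with h | h
    · rw [hform1 z h]
      exact mul_ne_zero hn2 (mul_ne_zero (pow_ne_zero _ hz) (pow_ne_zero _ hz))
    · rw [hform2 z h]
      exact mul_ne_zero hn2 (pow_ne_zero _ hz)
  have hf0 : ∀ z : F, z = 0 →
      (1 - z ^ t) * z ^ (e + r) - z ^ r - z ^ (t + r) = 0 := by
    intro z hz
    subst hz
    rw [zero_pow (by omega : e + r ≠ 0), zero_pow (by omega : r ≠ 0),
      zero_pow (by omega : t + r ≠ 0)]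
    ring
  -- key: from u^k = 1 with appropriate gcd, deduce u = 1
  apply Finite.injective_iff_bijective.mp
  intro x y hxy
  simp only at hxy
  by_cases hx : x = 0
  · by_cases hy : y = 0
    · rw [hx, hy]
    · exact absurd (hf0 x hx ▸ hxy.symm) (hne0 y hy)
  · by_cases hy : y = 0
    · exact absurd (hf0 y hy ▸ hxy) (hne0 x hx)
    · have hdiv : x / y ≠ 0 := div_ne_zero hx hy
      have hxy' := hxy
      rcases hse x hx with hx1 | hx1 <;> rcases hse y hy with hy1 | hy1
      · -- both "squares"
        rw [hform1 x hx1, hform1 y hy1] at hxy'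
        have hk : x ^ (t + r) = y ^ (t + r) := by
          rw [pow_add, pow_add]; exact mul_left_cancel₀ hn2 hxy'
        have hu1 : (x / y) ^ (t + r) = 1 := by
          rw [div_pow, hk, div_self (pow_ne_zero _ hy)]
        have hue : (x / y) ^ e = 1 := by
          rw [div_pow, hx1, hy1]; norm_num
        have hd2 : orderOf (x / y) ∣ 2 := h2 ▸ hgcd (x / y) hdiv _ hu1
        have hde : orderOf (x / y) ∣ e := orderOf_dvd_of_pow_eq_one hue
        have ho1 : orderOf (x / y) = 1 := by
          rcases (Nat.dvd_prime Nat.prime_two).mp hd2 with h | h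
          · exact h
          · rw [h] at hde; omega
        have := orderOf_eq_one_iff.mp ho1
        exact (div_eq_one_iff_eq hy).mp this
      · -- x square, y nonsquare: contradiction
        exfalso
        rw [hform1 x hx1, hform2 y hy1] at hxy'
        have hk : x ^ t * x ^ r = y ^ r := mul_left_cancel₀ hn2 hxy'
        have hL : (x ^ t * x ^ r) ^ e = 1 := by
          rw [← pow_add, ← pow_mul, mul_comm (t + r) e, pow_mul, hx1, one_pow]
        have hR : (y ^ r) ^ e = -1 := by
          rw [← pow_mul, mul_comm r e, pow_mul, hy1, hrodd.neg_one_pow]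
        rw [hk, hR] at hL
        exact hF2 (by linear_combination -hL)
      · -- x nonsquare, y square: contradiction
        exfalso
        rw [hform2 x hx1, hform1 y hy1] at hxy'
        have hk : y ^ t * y ^ r = x ^ r := (mul_left_cancel₀ hn2 hxy').symm
        have hL : (y ^ t * y ^ r) ^ e = 1 := by
          rw [← pow_add, ← pow_mul, mul_comm (t + r) e, pow_mul, hy1, one_pow]
        have hR : (x ^ r) ^ e = -1 := by
          rw [← pow_mul, mul_comm r e, pow_mul, hx1, hrodd.neg_one_pow]
        rw [hk, hR] at hL
        exact hF2 (by linear_combination -hL)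
      · -- both nonsquares
        rw [hform2 x hx1, hform2 y hy1] at hxy'
        have hk : x ^ r = y ^ r := mul_left_cancel₀ hn2 hxy'
        have hu1 : (x / y) ^ r = 1 := by
          rw [div_pow, hk, div_self (pow_ne_zero _ hy)]
        have hd1 : orderOf (x / y) ∣ 1 := h1 ▸ hgcd (x / y) hdiv _ hu1
        have := orderOf_eq_one_iff.mp (Nat.dvd_one.mp hd1)
        exact (div_eq_one_iff_eq hy).mp this
end

section
/- Let q = 3^n, t a positive integer, α, β, θ ∈ F_q*, and let C_0 (resp. C_1) be the nonzero squares (resp. nonsquares) of F_q. Define f(0)=0, f(x)=α·x^t for x ∈ C_0, and f(x)=β·(x^3 + θx^2 + θ^2 x) for x ∈ C_1. Then f is a bijection of F_q if and only if gcd(t, (q-1)/2)=1, η(θ)=1, and η(α)=η(β), where η is the quadratic character of F_q. -/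
open scoped Classical in
lemma quadChar_eq_qc {F : Type*} [Field F] [Fintype F] (a : F) :
    quadChar a = quadraticChar F a := by
  rw [quadraticChar_apply]
  unfold quadChar quadraticCharFun
  split_ifs <;> rfl

lemma nonsquare_ne_zero {F : Type*} [Field F] {x : F} (h : ¬ IsSquare x) : x ≠ 0 := by
  rintro rfl; exact h ⟨0, by ring⟩

theorem stmt_6 {F : Type*} [Field F] [Fintype F] (n t q : ℕ)
    (hn : 0 < n) (ht : 0 < t) (hq : q = 3 ^ n) (hcard : Fintype.card F = q)
    (α β θ : F) (hα : α ≠ 0) (hβ : β ≠ 0) (hθ : θ ≠ 0)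
    (f : F → F) (hf0 : f 0 = 0)
    (hfsq : ∀ x : F, x ≠ 0 → IsSquare x → f x = α * x ^ t)
    (hfns : ∀ x : F, ¬ IsSquare x → f x = β * (x ^ 3 + θ * x ^ 2 + θ ^ 2 * x)) :
    Function.Bijective f ↔
      Nat.gcd t ((q - 1) / 2) = 1 ∧ quadChar θ = 1 ∧ quadChar α = quadChar β := by
  classical
  set χ : MulChar F ℤ := quadraticChar F with hχdef
  -- numerics
  have hq3 : 3 ≤ q := by
    rw [hq]
    calc 3 = 3 ^ 1 := by norm_num
    _ ≤ 3 ^ n := Nat.pow_le_pow_right (by norm_num) hn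
  have hqodd : Odd q := hq ▸ Odd.pow ⟨1, by norm_num⟩
  set m := (q - 1) / 2 with hm
  have h2m : 2 * m = q - 1 := by obtain ⟨k, hk⟩ := hqodd; omega
  have hm1 : 1 ≤ m := by omega
  -- characteristic 3
  have hp : ringChar F = 3 := by
    have hcp : CharP F (ringChar F) := ringChar.charP F
    obtain ⟨k, hkp, hkcard⟩ := FiniteField.card F (ringChar F)
    have hdvd : ringChar F ∣ 3 := by
      have h1 : ringChar F ∣ q := by
        rw [← hcard, hkcard]; exact dvd_pow_self _ (by positivity)
      exact hkp.dvd_of_dvd_pow (show ringChar F ∣ 3 ^ n by rw [← hq]; exact h1)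
    exact (Nat.prime_dvd_prime_iff_eq hkp (by norm_num)).mp hdvd
  have hcp3 : CharP F 3 := hp ▸ ringChar.charP F
  have h3 : (3 : F) = 0 := by
    have := CharP.cast_eq_zero F 3
    simpa using this
  -- the cubic identity in char 3
  have hid : ∀ x : F, x ^ 3 + θ * x ^ 2 + θ ^ 2 * x = x * (x - θ) ^ 2 := by
    intro x; linear_combination (θ * x ^ 2) * h3
  have hfns' : ∀ x : F, ¬ IsSquare x → f x = β * (x * (x - θ) ^ 2) := by
    intro x hx; rw [hfns x hx, hid x]
  -- value of χ on f of a nonzero square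
  have hχfsq : ∀ x : F, x ≠ 0 → IsSquare x → χ (f x) = χ α := by
    intro x hx0 hxs
    rw [hfsq x hx0 hxs, map_mul]
    obtain ⟨c, hc⟩ := hxs
    have hc0 : c ≠ 0 := by rintro rfl; exact hx0 (by simp [hc])
    have hxt : x ^ t = (c ^ t) ^ 2 := by rw [hc]; ring
    rw [hxt, hχdef, quadraticChar_sq_one' (pow_ne_zero _ hc0), mul_one]
  -- value of χ on f of a nonsquare, assuming θ is a square
  have hχfns : ∀ x : F, IsSquare θ → ¬ IsSquare x → χ (f x) = - χ β := by
    intro x hθs hx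
    have hx0 : x ≠ 0 := nonsquare_ne_zero hx
    have hxθ : x ≠ θ := by rintro rfl; exact hx hθs
    rw [hfns' x hx, map_mul, map_mul, hχdef,
      quadraticChar_sq_one' (sub_ne_zero.mpr hxθ),
      quadraticChar_neg_one_iff_not_isSquare.mpr hx]
    ring
  have hfns0 : ∀ x : F, IsSquare θ → ¬ IsSquare x → f x ≠ 0 := by
    intro x hθs hx
    have hx0 : x ≠ 0 := nonsquare_ne_zero hx
    have hxθ : x ≠ θ := by rintro rfl; exact hx hθs
    rw [hfns' x hx]
    exact mul_ne_zero hβ (mul_ne_zero hx0 (pow_ne_zero _ (sub_ne_zero.mpr hxθ)))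
  have hfsq0 : ∀ x : F, x ≠ 0 → IsSquare x → f x ≠ 0 := by
    intro x hx0 hxs
    rw [hfsq x hx0 hxs]
    exact mul_ne_zero hα (pow_ne_zero _ hx0)
  -- injectivity on nonsquares, assuming θ is a square
  have hinjns : ∀ x y : F, IsSquare θ → ¬ IsSquare x → ¬ IsSquare y → f x = f y → x = y := by
    intro x y hθs hx hy hfe
    have hx0 : x ≠ 0 := nonsquare_ne_zero hx
    have hy0 : y ≠ 0 := nonsquare_ne_zero hy
    rw [hfns' x hx, hfns' y hy] at hfe
    have hfe' : x * (x - θ) ^ 2 = y * (y - θ) ^ 2 := mul_left_cancel₀ hβ hfe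
    have key : (x - y) * ((x - y) ^ 2 + θ * (x + y) + θ ^ 2) = 0 := by
      linear_combination hfe' + (x * y ^ 2 - x ^ 2 * y + θ * x ^ 2 - θ * y ^ 2) * h3
    rcases mul_eq_zero.mp key with h | hquad
    · exact sub_eq_zero.mp h
    · exfalso
      have hxsq : θ * x = (x - y + θ) ^ 2 := by linear_combination -hquad + θ * y * h3
      obtain ⟨u, hu⟩ := hθs
      have hu0 : u ≠ 0 := by rintro rfl; exact hθ (by simp [hu])
      refine hx ⟨(x - y + θ) / u, ?_⟩
      rw [div_mul_div_comm, eq_div_iff (mul_ne_zero hu0 hu0), ← hu]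
      linear_combination hxsq
  -- injectivity on squares, assuming the gcd condition
  have hinjsq : Nat.gcd t m = 1 → ∀ x y : F, x ≠ 0 → y ≠ 0 → IsSquare x → IsSquare y →
      f x = f y → x = y := by
    intro hgcd x y hx0 hy0 hxs hys hfe
    rw [hfsq x hx0 hxs, hfsq y hy0 hys] at hfe
    have hxyt : x ^ t = y ^ t := mul_left_cancel₀ hα hfe
    set xu : Fˣ := Units.mk0 x hx0 with hxu
    set yu : Fˣ := Units.mk0 y hy0 with hyu
    set z : Fˣ := xu * yu⁻¹ with hz
    have hzt : z ^ t = 1 := by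
      rw [hz, mul_pow, inv_pow]
      have : xu ^ t = yu ^ t := Units.ext (by simpa [hxu, hyu] using hxyt)
      rw [this, mul_inv_cancel]
    have hzm : z ^ m = 1 := by
      obtain ⟨c, hc⟩ := hxs
      obtain ⟨d, hd⟩ := hys
      have hc0 : c ≠ 0 := by rintro rfl; exact hx0 (by simp [hc])
      have hd0 : d ≠ 0 := by rintro rfl; exact hy0 (by simp [hd])
      have hzsq : z = (Units.mk0 c hc0 * (Units.mk0 d hd0)⁻¹) ^ 2 := by
        apply Units.ext
        push_cast [hz]
        field_simp
        simp only [hxu, hyu, Units.val_mk0]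
        rw [hc, hd]; field_simp
      rw [hzsq, ← pow_mul]
      have hcardu : Fintype.card Fˣ = 2 * m := by
        rw [Fintype.card_units, hcard, h2m]
      rw [← hcardu]
      exact pow_card_eq_one
    have hz1 : z = 1 := by
      have := pow_gcd_eq_one.mpr ⟨hzt, hzm⟩
      rwa [hgcd, pow_one] at this
    have : xu = yu := by rwa [hz, mul_inv_eq_one] at hz1
    have := congrArg Units.val this
    simpa [hxu, hyu] using this
  have hda : χ α = 1 ∨ χ α = -1 := by rw [hχdef]; exact quadraticChar_dichotomy hα
  have hdb : χ β = 1 ∨ χ β = -1 := by rw [hχdef]; exact quadraticChar_dichotomy hβ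
  constructor
  · rintro ⟨hinj, hsurj⟩
    have hθs : IsSquare θ := by
      by_contra hns
      have h1 : f θ = f 0 := by rw [hf0, hfns' θ hns]; simp
      exact hθ (hinj h1)
    refine ⟨?_, ?_, ?_⟩
    · -- gcd condition
      by_contra hg
      have hgpos : 0 < Nat.gcd t m := Nat.gcd_pos_of_pos_left m ht
      set d := Nat.gcd t m with hd
      have hd2 : 2 ≤ d := by omega
      have hdm : d ∣ m := Nat.gcd_dvd_right t m
      have hdt : d ∣ t := Nat.gcd_dvd_left t m
      obtain ⟨g, hgen⟩ := IsCyclic.exists_generator (α := Fˣ)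
      have horder : orderOf g = 2 * m := by
        rw [orderOf_eq_card_of_forall_mem_zpowers hgen, Nat.card_eq_fintype_card, Fintype.card_units, hcard, h2m]
      set k := m / d with hk
      have hkd : d * k = m := Nat.mul_div_cancel' hdm
      have hk1 : 1 ≤ k := by
        rcases Nat.eq_zero_or_pos k with h | h
        · rw [h, mul_zero] at hkd; omega
        · exact h
      have h2m2k : 2 * m = 2 * k * d := by rw [← hkd]; ring
      set z : Fˣ := (g ^ k) ^ 2 with hzdef
      have hz2k : z = g ^ (2 * k) := by rw [hzdef, ← pow_mul, mul_comm]
      have horderz : orderOf z = d := by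
        rw [hz2k, orderOf_pow, horder]
        have hgcd2 : Nat.gcd (2 * m) (2 * k) = 2 * k := Nat.gcd_eq_right ⟨d, h2m2k⟩
        rw [hgcd2, h2m2k]
        exact Nat.mul_div_cancel_left d (by omega)
      have hzne1 : z ≠ 1 := by
        intro h; rw [h, orderOf_one] at horderz; omega
      have hzt : z ^ t = 1 := orderOf_dvd_iff_pow_eq_one.mp (horderz ▸ hdt)
      have hzF0 : ((z : Fˣ) : F) ≠ 0 := Units.ne_zero z
      have hzFs : IsSquare ((z : Fˣ) : F) := ⟨((g ^ k : Fˣ) : F), by rw [hzdef]; push_cast; ring⟩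
      have h1 : f ((z : Fˣ) : F) = f 1 := by
        rw [hfsq _ hzF0 hzFs, hfsq 1 one_ne_zero IsSquare.one, one_pow,
          ← Units.val_pow_eq_pow_val, hzt, Units.val_one, mul_one]
      have h2 := hinj h1
      exact hzne1 (Units.ext (by rw [Units.val_one]; exact h2))
    · -- θ is a square
      rw [quadChar_eq_qc]
      exact quadraticChar_one_iff_isSquare hθ |>.mpr hθs
    · -- χ α = χ β
      rw [quadChar_eq_qc, quadChar_eq_qc, ← hχdef]
      by_contra hne
      obtain ⟨y, hy⟩ : ∃ y : F, χ y = - χ α := by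
        rcases hda with h | h
        · obtain ⟨y0, hy0⟩ := FiniteField.exists_nonsquare (F := F) (by rw [hp]; norm_num)
          refine ⟨y0, ?_⟩
          rw [hχdef, quadraticChar_neg_one_iff_not_isSquare.mpr hy0, ← hχdef, h]
        · exact ⟨1, by rw [map_one, h]; norm_num⟩
      obtain ⟨x, hxf⟩ := hsurj y
      have hy0 : y ≠ 0 := by
        rintro rfl
        have h0 : χ (0 : F) = 0 := by rw [hχdef]; exact quadraticChar_zero
        rw [h0] at hy
        omega
      have hx0 : x ≠ 0 := by rintro rfl; rw [hf0] at hxf; exact hy0 hxf.symm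
      by_cases hxs : IsSquare x
      · have h1 := hχfsq x hx0 hxs
        rw [hxf, hy] at h1
        omega
      · have h1 := hχfns x hθs hxs
        rw [hxf, hy] at h1
        have : χ α = χ β := by omega
        exact hne this
  · rintro ⟨hgcd, hθ1, hαβ⟩
    have hθs : IsSquare θ := by
      rw [quadChar_eq_qc] at hθ1
      exact (quadraticChar_one_iff_isSquare hθ).mp hθ1
    have hαβ' : χ α = χ β := by
      rw [quadChar_eq_qc, quadChar_eq_qc] at hαβ
      rw [hχdef]; exact hαβ
    rw [← Finite.injective_iff_bijective]
    have hker : ∀ w : F, f w = 0 → w = 0 := by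
      intro w hw
      by_contra hw0
      by_cases hws : IsSquare w
      · exact hfsq0 w hw0 hws hw
      · exact hfns0 w hθs hws hw
    intro x y hfe
    by_cases hx0 : x = 0
    · subst hx0; rw [hf0] at hfe; exact (hker y hfe.symm).symm
    by_cases hy0 : y = 0
    · subst hy0; rw [hf0] at hfe; exact hker x hfe
    by_cases hxs : IsSquare x <;> by_cases hys : IsSquare y
    · exact hinjsq hgcd x y hx0 hy0 hxs hys hfe
    · exfalso
      have h1 := hχfsq x hx0 hxs
      have h2 := hχfns y hθs hys
      rw [hfe, h2] at h1
      omega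
    · exfalso
      have h1 := hχfsq y hy0 hys
      have h2 := hχfns x hθs hxs
      rw [← hfe, h2] at h1
      omega
    · exact hinjns x y hθs hxs hys hfe
end

section
/- For any positive integer n and non-negative integer i, the polynomial f(x) = x^{(3^n-1)/2 + 3^i} + 2x^{(3^n-1)/2 + 3} + 2x^{(3^n-1)/2 + 2} + 2x^{(3^n-1)/2 + 1} + x^{3^i} + x^3 + x^2 + x is a permutation polynomial of F_{3^n}. -/
theorem stmt_7 {F : Type*} [Field F] [Fintype F] (n i : ℕ) (hn : 0 < n)
    (hcard : Fintype.card F = 3 ^ n) :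
    Function.Bijective (fun x : F =>
      x ^ ((3 ^ n - 1) / 2 + 3 ^ i) + 2 * x ^ ((3 ^ n - 1) / 2 + 3) +
        2 * x ^ ((3 ^ n - 1) / 2 + 2) + 2 * x ^ ((3 ^ n - 1) / 2 + 1) +
        x ^ (3 ^ i) + x ^ 3 + x ^ 2 + x) := by
  -- characteristic is 3
  have hp3 : ringChar F = 3 := by
    have hprime : (ringChar F).Prime := CharP.char_is_prime F (ringChar F)
    obtain ⟨m, hpm, hc⟩ := FiniteField.card F (ringChar F)
    have hdvd : ringChar F ∣ 3 ^ n := by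
      rw [← hcard, hc]; exact dvd_pow_self _ (by positivity)
    have := hprime.dvd_of_dvd_pow hdvd
    exact (Nat.prime_dvd_prime_iff_eq hprime (by norm_num)).mp this
  haveI h3 : CharP F 3 := hp3 ▸ ringChar.charP F
  have h3z : (3 : F) = 0 := CharP.cast_eq_zero F 3
  have h2 : (2 : F) = -1 := by linear_combination h3z
  have h1n : (1 : F) ≠ -1 := by
    intro h
    have : (2 : F) = 0 := by linear_combination h
    rw [h2] at this
    exact one_ne_zero (by linear_combination -this)
  set q := 3 ^ n with hq
  set s := (3 ^ n - 1) / 2 with hs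
  have hqodd : Odd q := Odd.pow (⟨1, by norm_num⟩ : Odd 3)
  have h2s : 2 * s = q - 1 := Nat.two_mul_div_two_of_even (Nat.Odd.sub_odd hqodd odd_one)
  have hq1 : ∀ c : F, c ≠ 0 → c ^ (q - 1) = 1 := by
    intro c hc
    rw [← hcard]; exact FiniteField.pow_card_sub_one_eq_one c hc
  have hdich : ∀ c : F, c ≠ 0 → c ^ s = 1 ∨ c ^ s = -1 := by
    intro c hc
    have hs2 : Fintype.card F / 2 = s := by
      obtain ⟨k, hk⟩ := hqodd
      omega
    have := FiniteField.pow_dichotomy (by rw [hp3]; norm_num) hc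
    rwa [hs2] at this
  -- value form
  have hval : ∀ x : F, x ^ (s + 3 ^ i) + 2 * x ^ (s + 3) + 2 * x ^ (s + 2) + 2 * x ^ (s + 1) +
      x ^ (3 ^ i) + x ^ 3 + x ^ 2 + x
      = x ^ (3 ^ i) * (x ^ s + 1) + x * (x - 1) ^ 2 * (1 - x ^ s) := by
    intro x
    rw [pow_add, pow_add, pow_add, pow_add]
    linear_combination (x ^ s * x ^ 3 + x ^ s * x + x ^ 2) * h3z
  have hfrob : ∀ a b : F, a ^ 3 ^ i = b ^ 3 ^ i → a = b := by
    intro a b hab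
    have hz : (a - b) ^ 3 ^ i = 0 := by
      rw [sub_pow_char_pow, hab, sub_self]
    have := pow_eq_zero_iff (pow_ne_zero i (by norm_num : (3:ℕ) ≠ 0)) |>.mp hz
    exact sub_eq_zero.mp this
  -- x^s = 1 case value
  have hv1 : ∀ x : F, x ^ s = 1 →
      x ^ (3 ^ i) * (x ^ s + 1) + x * (x - 1) ^ 2 * (1 - x ^ s) = -(x ^ (3 ^ i)) := by
    intro x hx; rw [hx]; linear_combination (x ^ 3 ^ i) * h3z
  have hvm1 : ∀ x : F, x ^ s = -1 →
      x ^ (3 ^ i) * (x ^ s + 1) + x * (x - 1) ^ 2 * (1 - x ^ s) = -(x * (x - 1) ^ 2) := by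
    intro x hx; rw [hx]; linear_combination (x * (x - 1) ^ 2) * h3z
  -- key sign facts
  have hsq : ∀ c : F, c ≠ 0 → (c ^ 2) ^ s = 1 := by
    intro c hc
    rw [← pow_mul, mul_comm 2 s, pow_mul, ← pow_mul, mul_comm, h2s]
    exact hq1 c hc
  have hm1ne : ∀ x : F, x ^ s = -1 → x ≠ 0 ∧ x ≠ 1 := by
    intro x hx
    have hq3 : 3 ≤ q := by
      calc 3 = 3 ^ 1 := by norm_num
        _ ≤ 3 ^ n := Nat.pow_le_pow_right (by norm_num) hn
    have hs0 : s ≠ 0 := by omega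
    constructor
    · intro h; rw [h, zero_pow hs0] at hx
      exact one_ne_zero (α := F) (by linear_combination hx)
    · intro h; rw [h, one_pow] at hx; exact h1n hx
  -- injectivity
  have hinj : Function.Injective (fun x : F =>
      x ^ (s + 3 ^ i) + 2 * x ^ (s + 3) + 2 * x ^ (s + 2) + 2 * x ^ (s + 1) +
        x ^ (3 ^ i) + x ^ 3 + x ^ 2 + x) := by
    intro a b hab
    simp only at hab
    rw [hval a, hval b] at hab
    -- handle zeros
    have hzero : ∀ c : F, c ≠ 0 →
        c ^ (3 ^ i) * (c ^ s + 1) + c * (c - 1) ^ 2 * (1 - c ^ s) ≠ 0 := by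
      intro c hc
      rcases hdich c hc with h | h
      · rw [hv1 c h]
        simp only [neg_ne_zero]
        exact pow_ne_zero _ hc
      · rw [hvm1 c h]
        simp only [neg_ne_zero]
        obtain ⟨_, hc1⟩ := hm1ne c h
        exact mul_ne_zero hc (pow_ne_zero _ (sub_ne_zero.mpr hc1))
    by_cases ha : a = 0
    · by_cases hb : b = 0
      · rw [ha, hb]
      · exfalso
        apply hzero b hb
        rw [← hab, ha]
        ring
    by_cases hb : b = 0
    · exfalso
      apply hzero a ha
      rw [hab, hb]
      ring
    -- both nonzero
    -- sign of value when c^s = 1 : value^s = (-1)^s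
    have hsign1 : ∀ c : F, c ≠ 0 → c ^ s = 1 → (-(c ^ (3 ^ i))) ^ s = (-1 : F) ^ s := by
      intro c hc hcs
      rw [neg_pow, ← pow_mul, mul_comm (3 ^ i) s, pow_mul, hcs, one_pow, mul_one]
    have hsignm1 : ∀ c : F, c ^ s = -1 → (-(c * (c - 1) ^ 2)) ^ s = -((-1 : F) ^ s) := by
      intro c hcs
      obtain ⟨hc, hc1⟩ := hm1ne c hcs
      rw [neg_pow, mul_pow, hcs, hsq (c - 1) (sub_ne_zero.mpr hc1)]
      ring
    have hm1s : ((-1 : F) ^ s) ≠ 0 := pow_ne_zero _ (neg_ne_zero.mpr one_ne_zero)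
    rcases hdich a ha with hA | hA <;> rcases hdich b hb with hB | hB
    · -- both 1 : frobenius
      rw [hv1 a hA, hv1 b hB, neg_inj] at hab
      exact hfrob a b hab
    · -- 1, -1 : sign contradiction
      exfalso
      rw [hv1 a hA, hvm1 b hB] at hab
      have := hsign1 a ha hA
      rw [hab, hsignm1 b hB] at this
      have h0 : (2 : F) * ((-1 : F) ^ s) = 0 := by linear_combination -this
      rw [h2] at h0
      simp only [neg_mul, one_mul, neg_eq_zero] at h0
      exact hm1s h0
    · -- -1, 1 : sign contradiction
      exfalso
      rw [hvm1 a hA, hv1 b hB] at hab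
      have := hsign1 b hb hB
      rw [← hab, hsignm1 a hA] at this
      have h0 : (2 : F) * ((-1 : F) ^ s) = 0 := by linear_combination -this
      rw [h2] at h0
      simp only [neg_mul, one_mul, neg_eq_zero] at h0
      exact hm1s h0
    · -- both -1
      rw [hvm1 a hA, hvm1 b hB, neg_inj] at hab
      by_contra hne
      have hd : a - b ≠ 0 := sub_ne_zero.mpr hne
      -- a*(a-1)^2 = b*(b-1)^2 ⟹ (a-b)*((a-b)^2 + a + b + 1) = 0 in char 3
      have hfac : (a - b) * ((a - b) ^ 2 + a + b + 1) = 0 := by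
        linear_combination hab + (a * b ^ 2 - a ^ 2 * b + a ^ 2 - b ^ 2) * h3z
      have hrel : (a - b) ^ 2 + a + b + 1 = 0 :=
        (mul_eq_zero.mp hfac).resolve_left hd
      -- hence a = (a - b + 1)^2
      have hasq : a = (a - b + 1) ^ 2 := by
        linear_combination -hrel + b * h3z
      have hab1 : a - b + 1 ≠ 0 := by
        intro h
        rw [h] at hasq
        simp at hasq
        exact ha hasq
      have : a ^ s = 1 := by
        rw [hasq]
        exact hsq _ hab1
      rw [hA] at this
      exact h1n this.symm
  exact Finite.injective_iff_bijective.mp hinj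
end

section
/- For any even positive integer e, the polynomial f(x) = (1 - x - x^2)·x^{(3^e+1)/2} - 1 - x + x^2 is a permutation polynomial of F_{3^e}. -/
theorem stmt_8 {F : Type*} [Field F] [Fintype F] (e : ℕ) (he : 0 < e) (heven : Even e)
    (hcard : Fintype.card F = 3 ^ e) :
    Function.Bijective
      (fun x : F => (1 - x - x ^ 2) * x ^ ((3 ^ e + 1) / 2) - 1 - x + x ^ 2) := by
  classical
  have h3 : (3 : F) = 0 := by
    have h := FiniteField.cast_card_eq_zero F
    rw [hcard] at h
    push_cast at h
    exact pow_eq_zero_iff he.ne' |>.mp h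
  have hchar : ringChar F = 3 := by
    have hdvd : ringChar F ∣ 3 := (CharP.cast_eq_zero_iff F (ringChar F) 3).mp h3
    rcases (Nat.prime_three.eq_one_or_self_of_dvd _ hdvd) with h1 | h1
    · exact absurd h1 (CharP.char_ne_one F (ringChar F))
    · exact h1
  have hchar2 : ringChar F ≠ 2 := by rw [hchar]; norm_num
  set q := Fintype.card F with hq
  have hq3 : q = 3 ^ e := hcard
  have hqodd : q % 2 = 1 := FiniteField.odd_card_of_char_ne_two hchar2
  have hq9 : 9 ≤ q := by
    obtain ⟨k, hk⟩ := heven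
    have hk1 : 1 ≤ k := by omega
    have : 9 ^ 1 ≤ 9 ^ k := Nat.pow_le_pow_right (by norm_num) hk1
    rw [hq3, hk, ← two_mul, pow_mul]
    simpa using this
  have hexp : (3 ^ e + 1) / 2 = q / 2 + 1 := by omega
  have hqdpos : q / 2 ≠ 0 := by omega
  -- squares to the power q/2 are 1
  have hsqpow : ∀ t : F, t ≠ 0 → (t ^ 2) ^ (q / 2) = 1 := by
    intro t ht
    rw [← pow_mul]
    have h2 : 2 * (q / 2) = q - 1 := by omega
    rw [h2]
    exact FiniteField.pow_card_sub_one_eq_one t ht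
  -- -1 is a square, so (-1)^(q/2) = 1
  have hm1 : (-1 : F) ^ (q / 2) = 1 := by
    have hsq : IsSquare (-1 : F) := by
      rw [FiniteField.isSquare_neg_one_iff]
      show q % 4 ≠ 3
      obtain ⟨k, hk⟩ := heven
      rw [hq3, hk, ← two_mul, pow_mul]
      have : (3 ^ 2) ^ k % 4 = 1 := by
        rw [Nat.pow_mod]; norm_num
      omega
    obtain ⟨s, hs⟩ := hsq
    have hs0 : s ≠ 0 := by
      intro h; rw [h, mul_zero] at hs; exact one_ne_zero (neg_eq_zero.mp hs)
    rw [hs, ← sq]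
    exact hsqpow s hs0
  have h1ne : (1 : F) ≠ -1 := by
    intro h
    exact one_ne_zero (α := F) (by linear_combination h3 - h)
  have h0ne : (0 : F) ≠ -1 := by
    intro h; exact one_ne_zero (α := F) (by linear_combination h)
  have dich : ∀ x : F, x ^ (q / 2) ≠ -1 → x = 0 ∨ x ^ (q / 2) = 1 := by
    intro x hx
    rcases eq_or_ne x 0 with h | h
    · exact Or.inl h
    · rcases FiniteField.pow_dichotomy hchar2 h with h' | h'
      · exact Or.inr h'
      · exact absurd h' hx
  -- value lemma
  have val : ∀ x : F, (1 - x - x ^ 2) * x ^ ((3 ^ e + 1) / 2) - 1 - x + x ^ 2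
      = if x ^ (q / 2) = -1 then x * (x + 1) ^ 2 - 1 else -x ^ 3 - 1 := by
    intro x
    rw [hexp]
    by_cases hx : x ^ (q / 2) = -1
    · have hxx : x ^ (q / 2 + 1) = -1 * x := by rw [pow_succ, hx]
      rw [if_pos hx, hxx]
      linear_combination (-x) * h3
    · rw [if_neg hx]
      rcases dich x hx with h | h
      · subst h
        have hxx : (0 : F) ^ (q / 2 + 1) = 0 := zero_pow (by omega)
        rw [hxx]
        ring
      · have hxx : x ^ (q / 2 + 1) = x := by rw [pow_succ, h, one_mul]
        rw [hxx]
        ring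
  rw [← Finite.injective_iff_bijective]
  intro a b hab
  simp only at hab
  rw [val a, val b] at hab
  by_cases ha : a ^ (q / 2) = -1 <;> by_cases hb : b ^ (q / 2) = -1
  · -- both nonsquares
    rw [if_pos ha, if_pos hb] at hab
    by_contra hne
    have hd : a - b ≠ 0 := sub_ne_zero.mpr hne
    have hkey : (a - b) * ((a - b) ^ 2 - (a + b) + 1) = 0 := by
      linear_combination hab + (b ^ 2 - a ^ 2 + a * b ^ 2 - a ^ 2 * b) * h3
    rcases mul_eq_zero.mp hkey with h | hquad
    · exact hd h
    · have hsq2 : -a = (a - b - 1) ^ 2 := by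
        linear_combination (-1 : F) * hquad + (-b) * h3
      have ht : a - b - 1 ≠ 0 := by
        intro h
        rw [h] at hsq2
        have ha0 : a = 0 := by linear_combination -hsq2
        rw [ha0, zero_pow hqdpos] at ha
        exact h0ne ha
      have haval : a = -1 * (a - b - 1) ^ 2 := by linear_combination -hsq2
      rw [haval, mul_pow, hm1, hsqpow _ ht, one_mul] at ha
      exact h1ne ha
  · -- a nonsquare, b square-ish
    rw [if_pos ha, if_neg hb] at hab
    exfalso
    have h' : -b ^ 3 = a * (a + 1) ^ 2 := by linear_combination -hab
    have ha1 : a + 1 ≠ 0 := by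
      intro h
      have : a = -1 := by linear_combination h
      rw [this, hm1] at ha
      exact h1ne ha
    have ha0 : a ≠ 0 := by
      intro h; rw [h, zero_pow hqdpos] at ha; exact h0ne ha
    rcases dich b hb with h | h
    · rw [h] at h'
      exact (mul_ne_zero ha0 (pow_ne_zero 2 ha1)) (by linear_combination -h')
    · have hL : (-b ^ 3) ^ (q / 2) = 1 := by
        rw [show -b ^ 3 = -1 * b ^ 3 by ring, mul_pow, hm1, one_mul,
          pow_right_comm, h, one_pow]
      rw [h', mul_pow, ha, hsqpow _ ha1] at hL
      exact h1ne (by linear_combination -hL)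
  · -- a square-ish, b nonsquare
    rw [if_neg ha, if_pos hb] at hab
    exfalso
    have h' : -a ^ 3 = b * (b + 1) ^ 2 := by linear_combination hab
    have hb1 : b + 1 ≠ 0 := by
      intro h
      have : b = -1 := by linear_combination h
      rw [this, hm1] at hb
      exact h1ne hb
    have hb0 : b ≠ 0 := by
      intro h; rw [h, zero_pow hqdpos] at hb; exact h0ne hb
    rcases dich a ha with h | h
    · rw [h] at h'
      exact (mul_ne_zero hb0 (pow_ne_zero 2 hb1)) (by linear_combination -h')
    · have hL : (-a ^ 3) ^ (q / 2) = 1 := by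
        rw [show -a ^ 3 = -1 * a ^ 3 by ring, mul_pow, hm1, one_mul,
          pow_right_comm, h, one_pow]
      rw [h', mul_pow, hb, hsqpow _ hb1] at hL
      exact h1ne (by linear_combination -hL)
  · -- both square-ish
    rw [if_neg ha, if_neg hb] at hab
    have h' : a ^ 3 = b ^ 3 := by linear_combination -hab
    have hz : (a - b) ^ 3 = 0 := by
      linear_combination h' + (a * b ^ 2 - a ^ 2 * b) * h3
    have hab0 := pow_eq_zero_iff (n := 3) (by norm_num) |>.mp hz
    exact sub_eq_zero.mp hab0
end

section
/- For any positive integer n, the polynomial f(x) = x^{(3^n-1)/2 + 2} + x^{(3^n-1)/2 + 1} + x^3 + 2x^2 + 2x is a permutation polynomial of F_{3^n}. -/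
theorem stmt_9 {F : Type*} [Field F] [Fintype F] (n : ℕ) (hn : 0 < n)
    (hcard : Fintype.card F = 3 ^ n) :
    Function.Bijective (fun x : F =>
      x ^ ((3 ^ n - 1) / 2 + 2) + x ^ ((3 ^ n - 1) / 2 + 1) +
        x ^ 3 + 2 * x ^ 2 + 2 * x) := by
  classical
  set m := (3 ^ n - 1) / 2 with hm
  obtain ⟨k, hk⟩ : Odd (3 ^ n) := Odd.pow (by decide)
  have h3n : 3 ≤ 3 ^ n := by
    calc (3:ℕ) = 3 ^ 1 := by norm_num
    _ ≤ 3 ^ n := Nat.pow_le_pow_right (by norm_num) hn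
  have h2m : 3 ^ n - 1 = 2 * m := by omega
  have hm0 : m ≠ 0 := by omega
  have h3 : (3 : F) = 0 := by
    have h := FiniteField.cast_card_eq_zero F
    rw [hcard] at h
    push_cast at h
    exact pow_eq_zero_iff hn.ne' |>.mp h
  have hne1 : (1 : F) ≠ -1 := by
    intro h
    exact one_ne_zero (α := F) (by linear_combination h3 - h)
  have hne0 : (-1 : F) ≠ 0 := neg_ne_zero.mpr one_ne_zero
  have hunit : ∀ x : F, x ≠ 0 → x ^ (2 * m) = 1 := by
    intro x hx
    rw [← h2m, ← hcard]
    exact FiniteField.pow_card_sub_one_eq_one x hx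
  have hsq : ∀ d : F, d ≠ 0 → (d ^ 2) ^ m = 1 := by
    intro d hd
    rw [← pow_mul]
    exact hunit d hd
  have key : ∀ x : F, x ≠ 0 → x ^ m = 1 ∨ x ^ m = -1 := by
    intro x hx
    have h := hunit x hx
    have h' : (x ^ m - 1) * (x ^ m + 1) = 0 := by linear_combination h
    rcases mul_eq_zero.mp h' with h'' | h''
    · exact Or.inl (sub_eq_zero.mp h'')
    · exact Or.inr (eq_neg_of_add_eq_zero_left h'')
  apply Finite.injective_iff_bijective.mp
  intro x y heq
  simp only at heq
  have heq2 : x ^ m * x ^ 2 + x ^ m * x + x ^ 3 + 2 * x ^ 2 + 2 * x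
      = y ^ m * y ^ 2 + y ^ m * y + y ^ 3 + 2 * y ^ 2 + 2 * y := by
    linear_combination heq
  have good : ∀ z : F, z = 0 ∨ z ^ m = 1 →
      z ^ m * z ^ 2 + z ^ m * z + z ^ 3 + 2 * z ^ 2 + 2 * z = z ^ 3 ∧
      (z ^ 3) ^ m ≠ -1 := by
    intro z hz
    rcases hz with rfl | hz
    · refine ⟨by simp, ?_⟩
      rw [show ((0:F) ^ 3) = 0 by ring, zero_pow hm0]
      exact fun h => hne0 h.symm
    · refine ⟨by rw [hz]; linear_combination (z ^ 2 + z) * h3, ?_⟩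
      rw [← pow_mul, mul_comm 3 m, pow_mul, hz, one_pow]
      exact hne1
  have bad : ∀ z : F, z ^ m = -1 →
      z ^ m * z ^ 2 + z ^ m * z + z ^ 3 + 2 * z ^ 2 + 2 * z = z * (z + 2) ^ 2 ∧
      (z * (z + 2) ^ 2) ^ m = -1 := by
    intro z hz
    have hz0 : z ≠ 0 := by
      intro h; rw [h, zero_pow hm0] at hz; exact hne0 hz.symm
    have hz2 : z + 2 ≠ 0 := by
      intro h
      have h1 : z = 1 := by linear_combination h - h3
      rw [h1, one_pow] at hz; exact hne1 hz
    refine ⟨by rw [hz]; linear_combination (-(z ^ 2) - z) * h3, ?_⟩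
    rw [mul_pow, hz, hsq _ hz2]; ring
  by_cases hx : x = 0 ∨ x ^ m = 1 <;> by_cases hy : y = 0 ∨ y ^ m = 1
  · obtain ⟨hfx, _⟩ := good x hx
    obtain ⟨hfy, _⟩ := good y hy
    have h3eq : x ^ 3 = y ^ 3 := by rw [← hfx, ← hfy]; exact heq2
    have hz : (x - y) ^ 3 = 0 := by
      linear_combination h3eq - (x ^ 2 * y - x * y ^ 2) * h3
    exact sub_eq_zero.mp (pow_eq_zero_iff (three_ne_zero) |>.mp hz)
  · push_neg at hy
    have hy' : y ^ m = -1 := (key y hy.1).resolve_left hy.2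
    obtain ⟨hfx, hfxm⟩ := good x hx
    obtain ⟨hfy, hfym⟩ := bad y hy'
    exact absurd (by rw [← hfx, heq2, hfy]; exact hfym) hfxm
  · push_neg at hx
    have hx' : x ^ m = -1 := (key x hx.1).resolve_left hx.2
    obtain ⟨hfy, hfym⟩ := good y hy
    obtain ⟨hfx, hfxm⟩ := bad x hx'
    exact absurd (by rw [← hfy, ← heq2, hfx]; exact hfxm) hfym
  · push_neg at hx; push_neg at hy
    have hx' : x ^ m = -1 := (key x hx.1).resolve_left hx.2
    have hy' : y ^ m = -1 := (key y hy.1).resolve_left hy.2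
    obtain ⟨hfx, _⟩ := bad x hx'
    obtain ⟨hfy, _⟩ := bad y hy'
    have hcube : x * (x + 2) ^ 2 = y * (y + 2) ^ 2 := by
      rw [← hfx, ← hfy]; exact heq2
    by_contra hne
    have hd : x - y ≠ 0 := sub_ne_zero.mpr hne
    have h1 : (x - y) * ((x - y) ^ 2 + (x + y) + 1) = 0 := by
      linear_combination hcube -
        (x ^ 2 - y ^ 2 + x - y + x ^ 2 * y - x * y ^ 2) * h3
    have h2 : (x - y) ^ 2 + (x + y) + 1 = 0 :=
      (mul_eq_zero.mp h1).resolve_left hd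
    have hX : x = (x - y + 1) ^ 2 := by linear_combination -h2 + y * h3
    have hd1 : x - y + 1 ≠ 0 := by
      intro h
      exact hx.1 (by rw [hX, h]; norm_num)
    have h1' := hsq _ hd1
    rw [← hX] at h1'
    rw [hx'] at h1'
    exact hne1 h1'.symm
end

section
/- For any odd positive integer n and non-negative integer i, the polynomial f(x) = x^{(3^n-1)/2 + 2^i} + 2x^{(3^n-1)/2 + 3} + 2x^{(3^n-1)/2 + 2} + 2x^{(3^n-1)/2 + 1} + x^{2^i} + x^3 + x^2 + x is a permutation polynomial of F_{3^n}. -/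
theorem stmt_10 {F : Type*} [Field F] [Fintype F] (n i : ℕ) (hn : Odd n) (hn0 : 0 < n)
    (hcard : Fintype.card F = 3 ^ n) :
    Function.Bijective (fun x : F =>
      x ^ ((3 ^ n - 1) / 2 + 2 ^ i) + 2 * x ^ ((3 ^ n - 1) / 2 + 3) +
        2 * x ^ ((3 ^ n - 1) / 2 + 2) + 2 * x ^ ((3 ^ n - 1) / 2 + 1) +
        x ^ (2 ^ i) + x ^ 3 + x ^ 2 + x) := by
  set e := (3 ^ n - 1) / 2 with he_def
  -- arithmetic facts
  obtain ⟨k, hk⟩ := hn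
  have h8 : (8 : ℕ) ∣ 9 ^ k - 1 := by simpa using Nat.sub_dvd_pow_sub_pow 9 1 k
  have h91 : 1 ≤ (9 : ℕ) ^ k := Nat.one_le_pow _ _ (by norm_num)
  have h3n : (3 : ℕ) ^ n = 3 * 9 ^ k := by
    rw [hk, pow_succ, pow_mul]; norm_num; ring
  have hem : e % 2 = 1 := by omega
  have h2e : 2 * e = 3 ^ n - 1 := by omega
  have heodd : Odd e := Nat.odd_iff.mpr hem
  have hcop : Nat.Coprime (2 ^ i) e :=
    Nat.Coprime.pow_left i (Nat.prime_two.coprime_iff_not_dvd.mpr (by omega))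
  have h2i1 : 1 ≤ 2 ^ i := Nat.one_le_pow _ _ (by norm_num)
  obtain ⟨c, t, hct⟩ : ∃ c t, 2 ^ i * c = e * t + 1 := by
    rcases eq_or_lt_of_le (show 1 ≤ e by omega) with he1 | he1
    · exact ⟨1, 2 ^ i - 1, by rw [← he1]; omega⟩
    · obtain ⟨c, -, hc⟩ := Nat.exists_mul_mod_eq_one_of_coprime hcop he1
      have := Nat.div_add_mod (2 ^ i * c) e
      exact ⟨c, 2 ^ i * c / e, by omega⟩
  -- characteristic 3 facts
  have h3F : (3 : F) = 0 := by
    have h := FiniteField.cast_card_eq_zero F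
    rw [hcard] at h
    push_cast at h
    exact (pow_eq_zero_iff hn0.ne').mp h
  have hm1 : (-1 : F) ≠ 1 := by
    intro h
    apply one_ne_zero (α := F)
    linear_combination h3F + h
  have hq1 : ∀ x : F, x ≠ 0 → x ^ (2 * e) = 1 := fun x hx => by
    rw [h2e, ← hcard]; exact FiniteField.pow_card_sub_one_eq_one x hx
  have hchi : ∀ x : F, x ≠ 0 → x ^ e = 1 ∨ x ^ e = -1 := fun x hx => by
    have h := hq1 x hx
    rw [two_mul, pow_add] at h
    exact mul_self_eq_one_iff.mp h
  have hmo : ((-1 : F)) ^ e = -1 := heodd.neg_one_pow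
  set g : F → F := fun x : F =>
      x ^ (e + 2 ^ i) + 2 * x ^ (e + 3) + 2 * x ^ (e + 2) + 2 * x ^ (e + 1) +
        x ^ (2 ^ i) + x ^ 3 + x ^ 2 + x with hg
  have hgx : ∀ x : F, g x = x ^ (e + 2 ^ i) + 2 * x ^ (e + 3) + 2 * x ^ (e + 2) +
      2 * x ^ (e + 1) + x ^ (2 ^ i) + x ^ 3 + x ^ 2 + x := fun x => by rw [hg]
  have hval1 : ∀ x : F, x ^ e = 1 → g x = -(x ^ (2 ^ i)) := by
    intro x hx
    rw [hgx]
    simp only [pow_add, hx, one_mul]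
    linear_combination (x ^ (2 ^ i) + x ^ 3 + x ^ 2 + x) * h3F
  have hval2 : ∀ x : F, x ^ e = -1 → g x = -(x * (x - 1) ^ 2) := by
    intro x hx
    rw [hgx]
    simp only [pow_add, hx]
    linear_combination (-(x ^ 2)) * h3F
  have hne1 : ∀ x : F, x ^ e = -1 → x ≠ 1 := by
    intro x hxe h1
    rw [h1, one_pow] at hxe
    exact hm1 hxe.symm
  have hg0 : g 0 = 0 := by
    rw [hgx]
    rw [zero_pow (by omega), zero_pow (by omega), zero_pow (by omega), zero_pow (by omega),
      zero_pow (by omega), zero_pow (by omega), zero_pow (by omega)]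
    ring
  have hgz : ∀ x : F, x ≠ 0 → g x ≠ 0 := by
    intro x hx
    rcases hchi x hx with h | h
    · rw [hval1 x h]
      exact neg_ne_zero.mpr (pow_ne_zero _ hx)
    · rw [hval2 x h]
      have hx1 : x - 1 ≠ 0 := sub_ne_zero.mpr (hne1 x h)
      exact neg_ne_zero.mpr (mul_ne_zero hx (pow_ne_zero _ hx1))
  have hchig1 : ∀ x : F, x ^ e = 1 → (g x) ^ e = -1 := by
    intro x h1
    rw [hval1 x h1, neg_pow, hmo, pow_right_comm, h1, one_pow, mul_one]
  have hchig2 : ∀ x : F, x ≠ 0 → x ^ e = -1 → (g x) ^ e = 1 := by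
    intro x hx h1
    have hx1 : x - 1 ≠ 0 := sub_ne_zero.mpr (hne1 x h1)
    rw [hval2 x h1, neg_pow, hmo, mul_pow, h1, pow_right_comm]
    rcases hchi (x - 1) hx1 with h | h <;> rw [h] <;> norm_num
  have hinj1 : ∀ x : F, x ^ e = 1 → (x ^ (2 ^ i)) ^ c = x := by
    intro x h1
    rw [← pow_mul, hct, pow_add, pow_mul, h1, one_pow, one_mul, pow_one]
  rw [← Finite.injective_iff_bijective]
  intro a b hab
  by_cases ha : a = 0
  · by_cases hb : b = 0
    · rw [ha, hb]
    · exfalso; apply hgz b hb; rw [← hab, ha, hg0]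
  · by_cases hb : b = 0
    · exfalso; apply hgz a ha; rw [hab, hb, hg0]
    · rcases hchi a ha with h1 | h1 <;> rcases hchi b hb with h2 | h2
      · -- both "squares"
        have hpow : a ^ (2 ^ i) = b ^ (2 ^ i) := by
          have := hab
          rw [hval1 a h1, hval1 b h2] at this
          exact neg_injective this
        calc a = (a ^ (2 ^ i)) ^ c := (hinj1 a h1).symm
          _ = (b ^ (2 ^ i)) ^ c := by rw [hpow]
          _ = b := hinj1 b h2
      · exfalso
        apply hm1
        have := hchig1 a h1
        rw [hab, hchig2 b hb h2] at this
        exact this.symm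
      · exfalso
        apply hm1
        have := hchig1 b h2
        rw [← hab, hchig2 a ha h1] at this
        exact this.symm
      · -- both non-squares
        have heq : a * (a - 1) ^ 2 = b * (b - 1) ^ 2 := by
          have := hab
          rw [hval2 a h1, hval2 b h2] at this
          exact neg_injective this
        by_cases hab' : a = b
        · exact hab'
        exfalso
        have hd0 : a - b ≠ 0 := sub_ne_zero.mpr hab'
        have hkey : (a - b) ^ 2 + a + b + 1 = 0 := by
          have hmul : (a - b) * ((a - b) ^ 2 + a + b + 1) = 0 := by
            linear_combination heq + (a * b * (b - a) + a ^ 2 - b ^ 2) * h3F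
          rcases mul_eq_zero.mp hmul with h | h
          · exact absurd h hd0
          · exact h
        have ha2 : a = (a - b + 1) ^ 2 := by linear_combination -hkey + b * h3F
        have hd1 : a - b + 1 ≠ 0 := by
          intro h
          apply ha
          rw [ha2, h]; ring
        have hsq : ((a - b + 1) ^ 2) ^ e = 1 := by
          rw [pow_right_comm]
          rcases hchi _ hd1 with h | h <;> rw [h] <;> norm_num
        have hone : a ^ e = 1 := by
          calc a ^ e = ((a - b + 1) ^ 2) ^ e := by rw [← ha2]
            _ = 1 := hsq
        rw [h1] at hone
        exact hm1 hone
end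

section
/- Let q = 3^n, t a positive integer, α, β, θ ∈ F_q*, and let C_0 (resp. C_1) be the nonzero squares (resp. nonsquares) of F_q. Define f(0)=0, f(x)=β·(x^3 + θx^2 + θ^2 x) for x ∈ C_0, and f(x)=α·x^t for x ∈ C_1. Then f is a bijection of F_q if and only if gcd(t, (q-1)/2)=1, η(θ)=-1, and either (t odd and η(α)=η(β)) or (t even and η(α)=-η(β)). -/
theorem stmt_11 {F : Type*} [Field F] [Fintype F] (n t q : ℕ)
    (hn : 0 < n) (ht : 0 < t) (hq : q = 3 ^ n) (hcard : Fintype.card F = q)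
    (α β θ : F) (hα : α ≠ 0) (hβ : β ≠ 0) (hθ : θ ≠ 0)
    (f : F → F) (hf0 : f 0 = 0)
    (hfsq : ∀ x : F, x ≠ 0 → IsSquare x → f x = β * (x ^ 3 + θ * x ^ 2 + θ ^ 2 * x))
    (hfns : ∀ x : F, ¬ IsSquare x → f x = α * x ^ t) :
    Function.Bijective f ↔
      Nat.gcd t ((q - 1) / 2) = 1 ∧ quadChar θ = -1 ∧
        ((Odd t ∧ quadChar α = quadChar β) ∨ (Even t ∧ quadChar α = -quadChar β)) := by
  classical
  -- basic numerology
  have hq3 : 3 ≤ q := hq ▸ Nat.le_self_pow hn.ne' 3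
  have hqodd : Odd q := hq ▸ Odd.pow (by decide)
  obtain ⟨k, hk⟩ := hqodd
  set m : ℕ := (q - 1) / 2 with hmdef
  have hm2 : 2 * m = q - 1 := by omega
  have hm0 : 0 < m := by omega
  -- characteristic 3
  haveI : CharP F (ringChar F) := ringChar.charP F
  obtain ⟨n', hp', hcard'⟩ := FiniteField.card F (ringChar F)
  have hchar : ringChar F = 3 := by
    have hdvd : ringChar F ∣ 3 ^ n := by
      rw [← hq, ← hcard, hcard']
      exact dvd_pow_self _ (by exact_mod_cast n'.ne_zero)
    have := hp'.dvd_of_dvd_pow hdvd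
    exact (Nat.prime_dvd_prime_iff_eq hp' (by norm_num)).mp this
  have h3 : (3 : F) = 0 := by
    haveI : CharP F 3 := hchar ▸ ringChar.charP F
    exact CharP.cast_eq_zero F 3
  have hF2 : ringChar F ≠ 2 := by rw [hchar]; norm_num
  -- bridge between quadChar and quadraticChar
  have hb : ∀ a : F, quadChar a = quadraticChar F a := by
    intro a
    simp only [quadChar, quadraticChar_apply, quadraticCharFun]
    split_ifs <;> rfl
  simp only [hb]
  set A := quadraticChar F α with hA
  set B := quadraticChar F β with hB
  have hAv : A = 1 ∨ A = -1 := quadraticChar_dichotomy hα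
  have hBv : B = 1 ∨ B = -1 := quadraticChar_dichotomy hβ
  -- sign condition reformulation
  have hSiff : ((Odd t ∧ A = B) ∨ (Even t ∧ A = -B)) ↔ A * (-1) ^ t ≠ B := by
    rcases Nat.even_or_odd t with he | ho
    · rw [he.neg_one_pow, mul_one]
      constructor
      · rintro (⟨hodd, -⟩ | ⟨-, h⟩)
        · exact absurd he (Nat.not_even_iff_odd.mpr hodd)
        · rw [h]; rcases hBv with h2 | h2 <;> rw [h2] <;> norm_num
      · intro h
        refine Or.inr ⟨he, ?_⟩
        rcases hAv with h1 | h1 <;> rcases hBv with h2 | h2 <;>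
          rw [h1, h2] at h ⊢ <;> omega
    · rw [ho.neg_one_pow]
      constructor
      · rintro (⟨-, h⟩ | ⟨heven, -⟩)
        · rw [h]; rcases hBv with h2 | h2 <;> rw [h2] <;> norm_num
        · exact absurd heven (Nat.not_even_iff_odd.mpr ho)
      · intro h
        refine Or.inl ⟨ho, ?_⟩
        rcases hAv with h1 | h1 <;> rcases hBv with h2 | h2 <;>
          rw [h1, h2] at h ⊢ <;> omega
  -- rewrite f on squares
  have hfsq' : ∀ x : F, x ≠ 0 → IsSquare x → f x = β * (x * (x - θ) ^ 2) := by
    intro x hx0 hxs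
    rw [hfsq x hx0 hxs]
    linear_combination (β * θ * x ^ 2) * h3
  constructor
  · -- forward direction
    intro hbij
    -- θ is a nonsquare
    have hθns : ¬ IsSquare θ := by
      intro hθs
      have hfθ : f θ = 0 := by
        rw [hfsq θ hθ hθs]
        linear_combination (β * θ ^ 3) * h3
      exact hθ (hbij.injective (hfθ.trans hf0.symm))
    have hsub : ∀ x : F, IsSquare x → x - θ ≠ 0 := by
      intro x hxs h
      exact hθns ((sub_eq_zero.mp h) ▸ hxs)
    have hχsq : ∀ x : F, x ≠ 0 → IsSquare x → quadraticChar F (f x) = B := by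
      intro x hx0 hxs
      rw [hfsq' x hx0 hxs, map_mul, map_mul, quadraticChar_sq_one' (hsub x hxs),
        (quadraticChar_one_iff_isSquare hx0).mpr hxs, mul_one, mul_one]
    have hχns : ∀ x : F, ¬ IsSquare x → quadraticChar F (f x) = A * (-1) ^ t := by
      intro x hxs
      rw [hfns x hxs, map_mul, map_pow, quadraticChar_neg_one_iff_not_isSquare.mpr hxs]
    refine ⟨?_, quadraticChar_neg_one_iff_not_isSquare.mpr hθns, ?_⟩
    · -- gcd condition
      by_contra hg
      set d : ℕ := Nat.gcd t m with hddef
      have hd0 : 0 < d := Nat.gcd_pos_of_pos_left m ht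
      have hd2 : 2 ≤ d := by omega
      have hdm : d ∣ m := Nat.gcd_dvd_right t m
      have hdt : d ∣ t := Nat.gcd_dvd_left t m
      obtain ⟨g, hgen⟩ := IsCyclic.exists_generator (α := Fˣ)
      have horder : orderOf g = q - 1 := by
        rw [orderOf_eq_card_of_forall_mem_zpowers hgen, Nat.card_eq_fintype_card,
          Fintype.card_units, hcard]
      obtain ⟨j, hj⟩ := hdm
      have hq1 : q - 1 = 2 * (d * j) := by rw [← hm2, hj]
      have hj0 : 0 < j := by
        rcases Nat.eq_zero_or_pos j with h | h
        · rw [h, mul_zero] at hj; omega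
        · exact h
      set c : Fˣ := g ^ j with hcdef
      set h : Fˣ := c ^ 2 with hhdef
      have hht : h ^ t = 1 := by
        obtain ⟨s, hs⟩ := hdt
        have : h ^ t = (g ^ (q - 1)) ^ s := by
          rw [hhdef, hcdef, ← pow_mul, ← pow_mul, ← pow_mul]
          congr 1
          rw [hq1, hs]
          ring
        rw [this, ← horder, pow_orderOf_eq_one, one_pow]
      have hne1 : h ≠ 1 := by
        intro hh1
        have : orderOf g ∣ j * 2 := by
          rw [orderOf_dvd_iff_pow_eq_one]
          rw [hhdef, hcdef, ← pow_mul] at hh1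
          exact hh1
        rw [horder] at this
        have hle := Nat.le_of_dvd (by omega) this
        have hlt : j * 2 < q - 1 := by
          rw [hq1]
          have h4 : 2 * (d * j) ≥ 2 * (2 * j) := by
            apply Nat.mul_le_mul_left
            exact Nat.mul_le_mul_right j hd2
          omega
        omega
      obtain ⟨y₀, hy₀ns⟩ := FiniteField.exists_nonsquare hF2
      have hy₀0 : y₀ ≠ 0 := by rintro rfl; exact hy₀ns (IsSquare.zero)
      have hhsq : IsSquare ((h : F)) := ⟨(c : F), by rw [hhdef, ← Units.val_mul, ← sq]⟩
      set x : F := (h : F) * y₀ with hxdef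
      have hxns : ¬ IsSquare x := by
        rw [← quadraticChar_neg_one_iff_not_isSquare]
        rw [hxdef, map_mul, (quadraticChar_one_iff_isSquare (Units.ne_zero h)).mpr hhsq,
          quadraticChar_neg_one_iff_not_isSquare.mpr hy₀ns, one_mul]
      have hfx : f x = f y₀ := by
        rw [hfns x hxns, hfns y₀ hy₀ns, hxdef, mul_pow, ← Units.val_pow_eq_pow_val, hht,
          Units.val_one, one_mul]
      have := hbij.injective hfx
      rw [hxdef] at this
      have hh1 : (h : F) = 1 := by
        have := mul_right_cancel₀ hy₀0 (this.trans (one_mul y₀).symm)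
        exact this
      exact hne1 (Units.ext hh1)
    · -- sign condition
      rw [hSiff]
      intro hABeq
      have hall : ∀ x : F, x ≠ 0 → quadraticChar F (f x) = B := by
        intro x hx0
        by_cases hxs : IsSquare x
        · exact hχsq x hx0 hxs
        · rw [hχns x hxs, hABeq]
      obtain ⟨z, hz0, hzχ⟩ : ∃ z : F, z ≠ 0 ∧ quadraticChar F z ≠ B := by
        rcases hBv with h1 | h1
        · obtain ⟨y₀, hy₀ns⟩ := FiniteField.exists_nonsquare hF2
          have hy₀0 : y₀ ≠ 0 := by rintro rfl; exact hy₀ns (IsSquare.zero)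
          exact ⟨y₀, hy₀0, by rw [quadraticChar_neg_one_iff_not_isSquare.mpr hy₀ns, h1]; omega⟩
        · exact ⟨1, one_ne_zero, by rw [map_one, h1]; omega⟩
      obtain ⟨x, hx⟩ := hbij.surjective z
      have hx0 : x ≠ 0 := by
        rintro rfl
        rw [hf0] at hx
        exact hz0 hx.symm
      exact hzχ (hx ▸ hall x hx0)
  · -- backward direction
    rintro ⟨hgcd, hθ', hsign⟩
    have hθns : ¬ IsSquare θ := quadraticChar_neg_one_iff_not_isSquare.mp hθ'
    have hsub : ∀ x : F, IsSquare x → x - θ ≠ 0 := by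
      intro x hxs h
      exact hθns ((sub_eq_zero.mp h) ▸ hxs)
    have hχsq : ∀ x : F, x ≠ 0 → IsSquare x → quadraticChar F (f x) = B := by
      intro x hx0 hxs
      rw [hfsq' x hx0 hxs, map_mul, map_mul, quadraticChar_sq_one' (hsub x hxs),
        (quadraticChar_one_iff_isSquare hx0).mpr hxs, mul_one, mul_one]
    have hχns : ∀ x : F, ¬ IsSquare x → quadraticChar F (f x) = A * (-1) ^ t := by
      intro x hxs
      rw [hfns x hxs, map_mul, map_pow, quadraticChar_neg_one_iff_not_isSquare.mpr hxs]
    have hfne : ∀ x : F, x ≠ 0 → f x ≠ 0 := by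
      intro x hx0
      by_cases hxs : IsSquare x
      · rw [hfsq' x hx0 hxs]
        exact mul_ne_zero hβ (mul_ne_zero hx0 (pow_ne_zero 2 (hsub x hxs)))
      · rw [hfns x hxs]
        exact mul_ne_zero hα (pow_ne_zero t hx0)
    have hSne : A * (-1) ^ t ≠ B := hSiff.mp hsign
    have hinj : Function.Injective f := by
      intro x y hxy
      by_cases hx0 : x = 0
      · by_cases hy0 : y = 0
        · rw [hx0, hy0]
        · exact absurd (by rw [← hxy, hx0, hf0]) (hfne y hy0)
      · by_cases hy0 : y = 0
        · exact absurd (by rw [hxy, hy0, hf0]) (hfne x hx0)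
        · by_cases hxs : IsSquare x <;> by_cases hys : IsSquare y
          · -- both squares: the hard case
            obtain ⟨a, ha⟩ := hxs
            obtain ⟨b, hbb⟩ := hys
            have hcancel : x * (x - θ) ^ 2 = y * (y - θ) ^ 2 :=
              mul_left_cancel₀ hβ (by rw [← hfsq' x hx0 ⟨a, ha⟩, ← hfsq' y hy0 ⟨b, hbb⟩, hxy])
            rw [ha, hbb] at hcancel ⊢
            have hsq2 : ((a * (a * a - θ)) - (b * (b * b - θ))) *
                ((a * (a * a - θ)) + (b * (b * b - θ))) = 0 := by
              linear_combination hcancel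
            rcases mul_eq_zero.mp hsq2 with hcase | hcase
            · -- a(a²-θ) = b(b²-θ)
              have hfac : (a - b) * ((a - b) ^ 2 - θ) = 0 := by
                linear_combination hcase + (a * b ^ 2 - a ^ 2 * b) * h3
              rcases mul_eq_zero.mp hfac with h1 | h1
              · rw [sub_eq_zero.mp h1]
              · exact absurd ⟨a - b, by linear_combination -h1⟩ hθns
            · -- a(a²-θ) = -b(b²-θ)
              have hfac : (a + b) * ((a + b) ^ 2 - θ) = 0 := by
                linear_combination hcase + (a * b ^ 2 + a ^ 2 * b) * h3
              rcases mul_eq_zero.mp hfac with h1 | h1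
              · have : b = -a := by linear_combination h1
                rw [this]; ring
              · exact absurd ⟨a + b, by linear_combination -h1⟩ hθns
          · -- x square, y nonsquare: impossible
            exfalso
            apply hSne
            rw [← hχns y hys, ← hxy, hχsq x hx0 hxs]
          · -- x nonsquare, y square: impossible
            exfalso
            apply hSne
            rw [← hχns x hxs, hxy, hχsq y hy0 hys]
          · -- both nonsquares
            have hxyt : x ^ t = y ^ t :=
              mul_left_cancel₀ hα (by rw [← hfns x hxs, ← hfns y hys, hxy])
            set s : F := x / y with hsdef
            have hs0 : s ≠ 0 := div_ne_zero hx0 hy0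
            have hχs : quadraticChar F s = 1 := by
              have hxeq : x = s * y := by rw [hsdef, div_mul_cancel₀ x hy0]
              have := map_mul (quadraticChar F) s y
              rw [← hxeq, quadraticChar_neg_one_iff_not_isSquare.mpr hxs,
                quadraticChar_neg_one_iff_not_isSquare.mpr hys] at this
              omega
            obtain ⟨c, hc⟩ := (quadraticChar_one_iff_isSquare hs0).mp hχs
            have hc0 : c ≠ 0 := by rintro rfl; rw [mul_zero] at hc; exact hs0 hc
            have hst : s ^ t = 1 := by
              rw [hsdef, div_pow, hxyt, div_self (pow_ne_zero t hy0)]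
            have hsm : s ^ m = 1 := by
              rw [hc, ← sq, ← pow_mul, hm2, ← hcard]
              exact FiniteField.pow_card_sub_one_eq_one c hc0
            have hos : orderOf s = 1 := by
              have h1 := orderOf_dvd_of_pow_eq_one hst
              have h2 := orderOf_dvd_of_pow_eq_one hsm
              have := Nat.dvd_gcd h1 h2
              rw [hgcd] at this
              exact Nat.dvd_one.mp this
            have : s = 1 := orderOf_eq_one_iff.mp hos
            exact (div_eq_one_iff_eq hy0).mp (hsdef ▸ this)
    exact Finite.injective_iff_bijective.mp hinj
end

section
/- For any odd positive integer n, the polynomial f(x) = x^{(3^n-1)/2 + 3} + x^{(3^n-1)/2 + 1} + x^3 + x^2 + x is a permutation polynomial of F_{3^n}. -/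
theorem stmt_12 {F : Type*} [Field F] [Fintype F] (n : ℕ) (hn : Odd n) (hn0 : 0 < n)
    (hcard : Fintype.card F = 3 ^ n) :
    Function.Bijective (fun x : F =>
      x ^ ((3 ^ n - 1) / 2 + 3) + x ^ ((3 ^ n - 1) / 2 + 1) + x ^ 3 + x ^ 2 + x) := by
  have hq3 : 3 ≤ 3 ^ n := by
    calc 3 = 3 ^ 1 := by norm_num
    _ ≤ 3 ^ n := Nat.pow_le_pow_right (by norm_num) hn0
  have hq4 : 3 ^ n % 4 = 3 := by
    obtain ⟨m, hm⟩ := hn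
    have h9 : 9 ^ m % 4 = 1 := by rw [Nat.pow_mod]; norm_num
    have h39 : 3 ^ n = 9 ^ m * 3 := by
      rw [hm, pow_succ, pow_mul]; norm_num
    omega
  set q := 3 ^ n with hqdef
  set k := (q - 1) / 2 with hk
  have hkodd : Odd k := by rw [Nat.odd_iff]; omega
  have h2k : k * 2 = q - 1 := by omega
  have hcard2 : Fintype.card F / 2 = k := by rw [hcard]; omega
  -- characteristic 3
  have h3 : (3 : F) = 0 := by
    have hc := FiniteField.cast_card_eq_zero F
    rw [hcard, hqdef] at hc
    push_cast at hc
    exact (pow_eq_zero_iff hn0.ne').mp hc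
  have h2 : (2 : F) ≠ 0 := fun h => by
    have h1 : (1 : F) = 0 := by linear_combination h3 - h
    simp at h1
  have hne : (1 : F) ≠ -1 := fun h => h2 (by linear_combination h)
  have hF2 : ringChar F ≠ 2 := by
    intro h
    have hc := ringChar.Nat.cast_ringChar (R := F)
    rw [h] at hc
    push_cast at hc
    exact h2 hc
  have hpow1 : ∀ t : F, t ≠ 0 → (t ^ k) ^ 2 = 1 := by
    intro t ht
    rw [← pow_mul, h2k, ← hcard]
    exact FiniteField.pow_card_sub_one_eq_one t ht
  have hdich : ∀ t : F, t ≠ 0 → t ^ k = 1 ∨ t ^ k = -1 := by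
    intro t ht
    have h := FiniteField.pow_dichotomy hF2 ht
    rwa [hcard2] at h
  have hsq : ∀ t : F, t ≠ 0 → t ^ k = 1 → ∃ a : F, t = a ^ 2 := by
    intro t ht h1
    obtain ⟨a, ha⟩ := (FiniteField.isSquare_iff hF2 ht).mpr (by rwa [hcard2])
    exact ⟨a, by rw [ha, sq]⟩
  have hnegk : (-1 : F) ^ k = -1 := hkodd.neg_one_pow
  have hno_sqrt_neg : ∀ d : F, d ^ 2 ≠ -1 := by
    intro d hd
    have hd0 : d ≠ 0 := by
      rintro rfl
      rw [show ((0:F) ^ 2) = 0 by ring] at hd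
      exact one_ne_zero (α := F) (by linear_combination hd)
    have h1 : (-1 : F) ^ k = 1 := by
      rw [← hd, ← pow_mul, mul_comm 2 k, pow_mul]
      exact hpow1 d hd0
    rw [hnegk] at h1
    exact hne h1.symm
  have form1 : ∀ x : F, x ^ k = 1 →
      x ^ (k + 3) + x ^ (k + 1) + x ^ 3 + x ^ 2 + x = -(x * (x + 1) ^ 2) := by
    intro x hx
    rw [pow_add, pow_add, hx, one_mul, one_mul]
    linear_combination (x ^ 3 + x ^ 2 + x) * h3
  have form2 : ∀ x : F, x ^ k = -1 →
      x ^ (k + 3) + x ^ (k + 1) + x ^ 3 + x ^ 2 + x = x ^ 2 := by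
    intro x hx
    rw [pow_add, pow_add, hx]
    ring
  have chi1 : ∀ x : F, x ≠ 0 → x ^ k = 1 → x + 1 ≠ 0 →
      (-(x * (x + 1) ^ 2)) ^ k = -1 := by
    intro x hx0 hxk hx1
    have e1 : (-(x * (x + 1) ^ 2)) = (-1) * x * (x + 1) ^ 2 := by ring
    rw [e1, mul_pow, mul_pow, hnegk, hxk, ← pow_mul, mul_comm 2 k, pow_mul,
      hpow1 (x + 1) hx1]
    ring
  have hinj3 : ∀ a b : F, a ^ 3 + a = b ^ 3 + b → a = b := by
    intro a b hab
    have hd : (a - b) ^ 3 + (a - b) = 0 := by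
      linear_combination hab + (a * b ^ 2 - a ^ 2 * b) * h3
    have hfac : (a - b) * ((a - b) ^ 2 + 1) = 0 := by linear_combination hd
    rcases mul_eq_zero.mp hfac with h | h
    · exact sub_eq_zero.mp h
    · exact absurd (by linear_combination h) (hno_sqrt_neg (a - b))
  -- a nonzero element with x^k = 1 makes x = -1 impossible
  have hnm1 : ∀ x : F, x ^ k = 1 → x + 1 ≠ 0 := by
    intro x hxk h
    have hx : x = -1 := by linear_combination h
    rw [hx, hnegk] at hxk
    exact hne hxk.symm
  refine Finite.injective_iff_bijective.mp ?_
  intro x y hxy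
  dsimp only at hxy
  by_cases hx0 : x = 0
  · subst hx0
    by_cases hy0 : y = 0
    · exact hy0.symm
    · exfalso
      have hzero : (0:F) ^ (k + 3) + 0 ^ (k + 1) + 0 ^ 3 + 0 ^ 2 + 0 = 0 := by
        rw [zero_pow (by omega : k + 3 ≠ 0), zero_pow (by omega : k + 1 ≠ 0)]
        norm_num
      rw [hzero] at hxy
      rcases hdich y hy0 with h1 | h1
      · rw [form1 y h1] at hxy
        have hy : y * (y + 1) ^ 2 = 0 := by linear_combination hxy
        rcases mul_eq_zero.mp hy with h | h
        · exact hy0 h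
        · exact hnm1 y h1 (sq_eq_zero_iff.mp h)
      · rw [form2 y h1] at hxy
        exact hy0 (sq_eq_zero_iff.mp hxy.symm)
  · by_cases hy0 : y = 0
    · exfalso
      subst hy0
      have hzero : (0:F) ^ (k + 3) + 0 ^ (k + 1) + 0 ^ 3 + 0 ^ 2 + 0 = 0 := by
        rw [zero_pow (by omega : k + 3 ≠ 0), zero_pow (by omega : k + 1 ≠ 0)]
        norm_num
      rw [hzero] at hxy
      rcases hdich x hx0 with h1 | h1
      · rw [form1 x h1] at hxy
        have hx : x * (x + 1) ^ 2 = 0 := by linear_combination -hxy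
        rcases mul_eq_zero.mp hx with h | h
        · exact hx0 h
        · exact hnm1 x h1 (sq_eq_zero_iff.mp h)
      · rw [form2 x h1] at hxy
        exact hx0 (sq_eq_zero_iff.mp hxy)
    · rcases hdich x hx0 with hx1 | hx1 <;> rcases hdich y hy0 with hy1 | hy1
      · -- both squares
        rw [form1 x hx1, form1 y hy1] at hxy
        obtain ⟨a, rfl⟩ := hsq x hx0 hx1
        obtain ⟨b, rfl⟩ := hsq y hy0 hy1
        have hfac : (a ^ 3 + a - (b ^ 3 + b)) * (a ^ 3 + a + (b ^ 3 + b)) = 0 := by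
          linear_combination -hxy
        rcases mul_eq_zero.mp hfac with h | h
        · have hab := hinj3 a b (by linear_combination h)
          rw [hab]
        · have hab := hinj3 a (-b) (by linear_combination h)
          rw [hab]; ring
      · -- x square, y nonsquare: impossible
        exfalso
        rw [form1 x hx1, form2 y hy1] at hxy
        have hl := chi1 x hx0 hx1 (hnm1 x hx1)
        rw [hxy, ← pow_mul, mul_comm 2 k, pow_mul, hpow1 y hy0] at hl
        exact hne hl
      · -- x nonsquare, y square: impossible
        exfalso
        rw [form2 x hx1, form1 y hy1] at hxy
        have hl := chi1 y hy0 hy1 (hnm1 y hy1)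
        rw [← hxy, ← pow_mul, mul_comm 2 k, pow_mul, hpow1 x hx0] at hl
        exact hne hl
      · -- both nonsquares
        rw [form2 x hx1, form2 y hy1] at hxy
        have hfac : (x - y) * (x + y) = 0 := by linear_combination hxy
        rcases mul_eq_zero.mp hfac with h | h
        · exact sub_eq_zero.mp h
        · exfalso
          have hx' : x = -y := by linear_combination h
          rw [hx', hkodd.neg_pow, hy1, neg_neg] at hx1
          exact hne hx1
end

section
/- Let q = 3^n and θ ∈ F_q* with η(θ) = 1. Then the map sending 0 to 0, x to x(x-θ)^2 on the set C_1 of nonsquares of F_q is injective on C_1; more precisely, for x, y ∈ C_1, x(x-θ)^2 = y(y-θ)^2 implies x = y. -/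
theorem stmt_14 {F : Type*} [Field F] [Fintype F] (n : ℕ) (hn : 0 < n)
    (hcard : Fintype.card F = 3 ^ n)
    (θ : F) (hθ : θ ≠ 0) (hθsq : IsSquare θ) :
    ∀ x y : F, ¬ IsSquare x → ¬ IsSquare y →
      x * (x - θ) ^ 2 = y * (y - θ) ^ 2 → x = y := by
  intro x y hx hy heq
  by_contra hxy
  have h30 : (3 : F) = 0 := by
    have h := FiniteField.cast_card_eq_zero F
    rw [hcard] at h
    push_cast at h
    exact pow_eq_zero_iff hn.ne' |>.mp h
  obtain ⟨s, hs⟩ := hθsq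
  have hs0 : s ≠ 0 := by rintro rfl; simp at hs; exact hθ hs
  have hg : (x - y) ^ 2 + θ * (x + y) + θ ^ 2 = 0 := by
    have hxy' : x - y ≠ 0 := sub_ne_zero.mpr hxy
    have h : (x - y) * ((x - y) ^ 2 + θ * (x + y) + θ ^ 2) = 0 := by
      linear_combination heq + (θ * x ^ 2 - θ * y ^ 2 - x ^ 2 * y + x * y ^ 2) * h30
    exact (mul_eq_zero.mp h).resolve_left hxy'
  have hsq : (x + 2 * θ + 2 * y) ^ 2 = θ * y := by
    linear_combination hg + (θ ^ 2 + y ^ 2 + θ * x + 2 * x * y + 2 * θ * y) * h30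
  apply hy
  refine ⟨(x + 2 * θ + 2 * y) * s⁻¹, ?_⟩
  rw [mul_mul_mul_comm, ← sq, hsq, hs]
  field_simp
end

section
/- Let q = 3^n and θ ∈ F_q* with η(θ) = -1. Then for x, y in the set C_0 of nonzero squares of F_q, x(x-θ)^2 = y(y-θ)^2 implies x = y. -/
theorem stmt_15 {F : Type*} [Field F] [Fintype F] (n : ℕ) (hn : 0 < n)
    (hcard : Fintype.card F = 3 ^ n)
    (θ : F) (hθ : θ ≠ 0) (hθns : ¬ IsSquare θ) :
    ∀ x y : F, x ≠ 0 → y ≠ 0 → IsSquare x → IsSquare y →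
      x * (x - θ) ^ 2 = y * (y - θ) ^ 2 → x = y := by
  haveI : Fact (Nat.Prime 3) := ⟨by norm_num⟩
  have hdvd : (3 : ℕ) ∣ ringChar F := by
    rw [prime_dvd_char_iff_dvd_card, hcard]
    exact dvd_pow_self 3 hn.ne'
  have hp := CharP.char_is_prime F (ringChar F)
  have h33 : ringChar F = 3 :=
    ((Nat.prime_dvd_prime_iff_eq Nat.prime_three hp).mp hdvd).symm
  haveI : CharP F 3 := h33 ▸ ringChar.charP F
  have h3 : (3 : F) = 0 := CharP.cast_eq_zero F 3
  intro x y hx hy hsx hsy heq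
  obtain ⟨a, ha⟩ := hsx
  obtain ⟨b, hb⟩ := hsy
  by_contra hxy
  have hQ : (x - y) * ((x - y) ^ 2 + θ * (x + y) + θ ^ 2) = 0 := by
    linear_combination heq + (-x ^ 2 * y + x * y ^ 2 + θ * x ^ 2 - θ * y ^ 2) * h3
  have hQ2 : (x - y) ^ 2 + θ * (x + y) + θ ^ 2 = 0 := by
    rcases mul_eq_zero.mp hQ with h | h
    · exact absurd (sub_eq_zero.mp h) hxy
    · exact h
  have hfac : (θ - (a + b) ^ 2) * (θ - (a - b) ^ 2) = 0 := by
    rw [ha, hb] at hQ2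
    linear_combination hQ2 + (a ^ 2 * b ^ 2 - a ^ 3 * b + a * b ^ 3 - θ * a ^ 2 - θ * b ^ 2 - a ^ 4 - b ^ 4 - a * b ^ 3 - a ^ 2 * b ^ 2 + a ^ 3 * b + a ^ 4 + b ^ 4) * h3
  rcases mul_eq_zero.mp hfac with h | h
  · exact hθns ⟨a + b, by rw [sub_eq_zero.mp h]; ring⟩
  · exact hθns ⟨a - b, by rw [sub_eq_zero.mp h]; ring⟩
end

section
/- Let q be a prime power with q ≡ 1 (mod 3), s = (q-1)/3, and ζ ∈ F_q an element of order 3. Suppose p (the characteristic) and s satisfy either (p ≡ 1 mod 3 and s ≡ 1 mod 3) or (p ≡ 2 mod 3 and s ≡ 2 mod 3). Then f(x) = x(x^s - ζ)(x^s - ζ^2) + x^3(x^s - 1)(x^s - ζ^2) + ζ·x^p(x^s - 1)(x^s - ζ) is a permutation polynomial of F_q; moreover these conditions on p and s are also necessary. -/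
theorem stmt_16 {F : Type*} [Field F] [Fintype F] (p n s : ℕ)
    (hp : p.Prime) [CharP F p] (hn : 0 < n) (hcard : Fintype.card F = p ^ n)
    (hmod : p ^ n % 3 = 1) (hs : s = (p ^ n - 1) / 3)
    (ζ : F) (hζ : orderOf ζ = 3) :
    Function.Bijective (fun x : F =>
      x * (x ^ s - ζ) * (x ^ s - ζ ^ 2) + x ^ 3 * (x ^ s - 1) * (x ^ s - ζ ^ 2) +
        ζ * x ^ p * (x ^ s - 1) * (x ^ s - ζ)) ↔
      (p % 3 = 1 ∧ s % 3 = 1) ∨ (p % 3 = 2 ∧ s % 3 = 2) := by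
  haveI := Fact.mk hp
  set f : F → F := fun x : F =>
      x * (x ^ s - ζ) * (x ^ s - ζ ^ 2) + x ^ 3 * (x ^ s - 1) * (x ^ s - ζ ^ 2) +
        ζ * x ^ p * (x ^ s - 1) * (x ^ s - ζ) with hf
  -- basic facts about ζ
  have h3 : ζ ^ 3 = 1 := by rw [← hζ]; exact pow_orderOf_eq_one ζ
  have hζ1 : ζ ≠ 1 := by
    intro h; rw [h, orderOf_one] at hζ; omega
  have hζ0 : ζ ≠ 0 := by
    intro h; rw [h] at h3; simp at h3
  have h1 : 1 + ζ + ζ ^ 2 = 0 := by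
    have hne := sub_ne_zero.mpr hζ1
    have h0 : (ζ - 1) * (1 + ζ + ζ ^ 2) = 0 := by linear_combination h3
    rcases mul_eq_zero.mp h0 with h' | h'
    · exact absurd h' hne
    · exact h'
  have hζ2 : ζ ^ 2 ≠ 1 := by
    intro h
    exact hζ1 (by linear_combination h3 - ζ * h)
  -- characteristic facts
  have hp3 : p ≠ 3 := by
    intro h; subst h
    have : (3 : ℕ) ∣ 3 ^ n := dvd_pow_self 3 hn.ne'
    omega
  have h3F : (3 : F) ≠ 0 := by
    intro h
    have hd := (CharP.cast_eq_zero_iff F p 3).mp h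
    exact hp3 ((Nat.prime_dvd_prime_iff_eq hp (by norm_num)).mp hd)
  have hpn2 : 2 ≤ p ^ n := le_trans hp.two_le (Nat.le_self_pow hn.ne' p)
  have h3s : 3 * s = p ^ n - 1 := by omega
  have hs0 : 0 < s := by omega
  have hq1 : ∀ x : F, x ≠ 0 → x ^ (p ^ n - 1) = 1 := by
    intro x hx; rw [← hcard]; exact FiniteField.pow_card_sub_one_eq_one x hx
  have hcube : ∀ x : F, x ≠ 0 → (x ^ s) ^ 3 = 1 := by
    intro x hx
    rw [← pow_mul, mul_comm, h3s]
    exact hq1 x hx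
  have hroots : ∀ y : F, y ^ 3 = 1 → y = 1 ∨ y = ζ ∨ y = ζ ^ 2 := by
    intro y hy
    have h0 : (y - 1) * ((y - ζ) * (y - ζ ^ 2)) = 0 := by
      linear_combination hy + (y - y ^ 2) * h1 + (y - 1) * h3
    rcases mul_eq_zero.mp h0 with h' | h'
    · exact Or.inl (sub_eq_zero.mp h')
    · rcases mul_eq_zero.mp h' with h'' | h''
      · exact Or.inr (Or.inl (sub_eq_zero.mp h''))
      · exact Or.inr (Or.inr (sub_eq_zero.mp h''))
  have htri : ∀ x : F, x ≠ 0 → x ^ s = 1 ∨ x ^ s = ζ ∨ x ^ s = ζ ^ 2 :=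
    fun x hx => hroots _ (hcube x hx)
  -- the simplified form of f on each coset
  have e0 : ∀ x : F, x ^ s = 1 → f x = 3 * x := by
    intro x h; simp only [hf]; rw [h]; linear_combination x * h3 - x * h1
  have e1 : ∀ x : F, x ^ s = ζ → f x = 3 * ζ ^ 2 * x ^ 3 := by
    intro x h; simp only [hf]; rw [h]
    linear_combination (-x ^ 3) * h3 - x ^ 3 * h1
  have e2 : ∀ x : F, x ^ s = ζ ^ 2 → f x = 3 * ζ ^ 2 * x ^ p := by
    intro x h; simp only [hf]; rw [h]
    linear_combination x ^ p * (ζ ^ 2 - ζ - 1) * h3 - x ^ p * h1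
  -- the s-th power of the image
  have c0 : ∀ x : F, x ^ s = 1 → (3 * x) ^ s = 3 ^ s := by
    intro x h; rw [mul_pow, h, mul_one]
  have c1 : ∀ x : F, x ^ s = ζ → (3 * ζ ^ 2 * x ^ 3) ^ s = 3 ^ s * (ζ ^ s) ^ 2 := by
    intro x h
    have h' : (3 * ζ ^ 2 * x ^ 3) ^ s = 3 ^ s * (ζ ^ s) ^ 2 * (x ^ s) ^ 3 := by ring
    rw [h', h, h3, mul_one]
  have c2 : ∀ x : F, x ^ s = ζ ^ 2 →
      (3 * ζ ^ 2 * x ^ p) ^ s = 3 ^ s * (ζ ^ s) ^ 2 * (ζ ^ p) ^ 2 := by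
    intro x h
    have h' : (3 * ζ ^ 2 * x ^ p) ^ s = 3 ^ s * (ζ ^ s) ^ 2 * (x ^ s) ^ p := by ring
    have h'' : ((ζ : F) ^ 2) ^ p = (ζ ^ p) ^ 2 := by ring
    rw [h', h, h'']
  have hfs : ∀ x : F, x ≠ 0 → f x ≠ 0 := by
    intro x hx
    rcases htri x hx with h | h | h
    · rw [e0 x h]; exact mul_ne_zero h3F hx
    · rw [e1 x h]
      exact mul_ne_zero (mul_ne_zero h3F (pow_ne_zero _ hζ0)) (pow_ne_zero _ hx)
    · rw [e2 x h]
      exact mul_ne_zero (mul_ne_zero h3F (pow_ne_zero _ hζ0)) (pow_ne_zero _ hx)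
  have hf0 : f 0 = 0 := by
    simp only [hf]
    rw [zero_pow hp.pos.ne']
    ring
  have hz_pow : ∀ m : ℕ, ζ ^ m = ζ ^ (m % 3) := by
    intro m
    rw [← hζ, pow_mod_orderOf]
  -- main injectivity lemma
  have main : ζ ^ s ≠ 1 → (ζ ^ s) ^ 2 ≠ 1 → (ζ ^ p) ^ 2 ≠ 1 →
      (ζ ^ s) ^ 2 * (ζ ^ p) ^ 2 ≠ 1 → Function.Bijective f := by
    intro hu1 hu2 hv2 huv
    refine Finite.injective_iff_bijective.mp ?_
    intro x y hxy
    by_cases hx : x = 0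
    · subst hx
      rw [hf0] at hxy
      by_contra hy
      exact hfs y (fun h => hy h.symm) hxy.symm
    by_cases hy : y = 0
    · subst hy
      rw [hf0] at hxy
      exact absurd hxy (hfs x hx)
    rcases htri x hx with hx1 | hx1 | hx1 <;> rcases htri y hy with hy1 | hy1 | hy1
    · -- both in C0
      rw [e0 x hx1, e0 y hy1] at hxy
      exact mul_left_cancel₀ h3F hxy
    · -- C0, C1
      rw [e0 x hx1, e1 y hy1] at hxy
      have h2 : (3 * x) ^ s = (3 * ζ ^ 2 * y ^ 3) ^ s := by rw [hxy]
      rw [c0 x hx1, c1 y hy1] at h2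
      exact absurd (mul_left_cancel₀ (pow_ne_zero s h3F)
        (show (3 : F) ^ s * 1 = 3 ^ s * (ζ ^ s) ^ 2 by rw [mul_one]; exact h2)).symm hu2
    · -- C0, C2
      rw [e0 x hx1, e2 y hy1] at hxy
      have h2 : (3 * x) ^ s = (3 * ζ ^ 2 * y ^ p) ^ s := by rw [hxy]
      rw [c0 x hx1, c2 y hy1] at h2
      have h2' : (3 : F) ^ s * 1 = 3 ^ s * ((ζ ^ s) ^ 2 * (ζ ^ p) ^ 2) := by
        rw [mul_one, ← mul_assoc]; exact h2
      exact absurd (mul_left_cancel₀ (pow_ne_zero s h3F) h2').symm huv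
    · -- C1, C0
      rw [e1 x hx1, e0 y hy1] at hxy
      have h2 : (3 * ζ ^ 2 * x ^ 3) ^ s = (3 * y) ^ s := by rw [hxy]
      rw [c1 x hx1, c0 y hy1] at h2
      exact absurd (mul_left_cancel₀ (pow_ne_zero s h3F)
        (show (3 : F) ^ s * (ζ ^ s) ^ 2 = 3 ^ s * 1 by rw [mul_one]; exact h2)) hu2
    · -- both in C1
      rw [e1 x hx1, e1 y hy1] at hxy
      have h2 : x ^ 3 = y ^ 3 :=
        mul_left_cancel₀ (mul_ne_zero h3F (pow_ne_zero 2 hζ0)) hxy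
      have hz3 : (x / y) ^ 3 = 1 := by
        rw [div_pow, h2, div_self (pow_ne_zero 3 hy)]
      have hzs : (x / y) ^ s = 1 := by
        rw [div_pow, hx1, hy1, div_self hζ0]
      rcases hroots _ hz3 with h | h | h
      · exact (div_eq_one_iff_eq hy).mp h
      · rw [h] at hzs; exact absurd hzs hu1
      · rw [h] at hzs
        have : (ζ ^ s) ^ 2 = 1 := by rw [← hzs]; ring
        exact absurd this hu2
    · -- C1, C2
      rw [e1 x hx1, e2 y hy1] at hxy
      have h2 : (3 * ζ ^ 2 * x ^ 3) ^ s = (3 * ζ ^ 2 * y ^ p) ^ s := by rw [hxy]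
      rw [c1 x hx1, c2 y hy1] at h2
      have hA : (3 : F) ^ s * (ζ ^ s) ^ 2 ≠ 0 :=
        mul_ne_zero (pow_ne_zero s h3F) (pow_ne_zero 2 (pow_ne_zero s hζ0))
      exact absurd (mul_left_cancel₀ hA
        (show (3:F) ^ s * (ζ ^ s) ^ 2 * 1 = 3 ^ s * (ζ ^ s) ^ 2 * (ζ ^ p) ^ 2 by
          rw [mul_one]; exact h2)).symm hv2
    · -- C2, C0
      rw [e2 x hx1, e0 y hy1] at hxy
      have h2 : (3 * ζ ^ 2 * x ^ p) ^ s = (3 * y) ^ s := by rw [hxy]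
      rw [c2 x hx1, c0 y hy1] at h2
      have h2' : (3 : F) ^ s * ((ζ ^ s) ^ 2 * (ζ ^ p) ^ 2) = 3 ^ s * 1 := by
        rw [mul_one, ← mul_assoc]; exact h2
      exact absurd (mul_left_cancel₀ (pow_ne_zero s h3F) h2') huv
    · -- C2, C1
      rw [e2 x hx1, e1 y hy1] at hxy
      have h2 : (3 * ζ ^ 2 * x ^ p) ^ s = (3 * ζ ^ 2 * y ^ 3) ^ s := by rw [hxy]
      rw [c2 x hx1, c1 y hy1] at h2
      have hA : (3 : F) ^ s * (ζ ^ s) ^ 2 ≠ 0 :=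
        mul_ne_zero (pow_ne_zero s h3F) (pow_ne_zero 2 (pow_ne_zero s hζ0))
      exact absurd (mul_left_cancel₀ hA
        (show (3:F) ^ s * (ζ ^ s) ^ 2 * (ζ ^ p) ^ 2 = 3 ^ s * (ζ ^ s) ^ 2 * 1 by
          rw [mul_one]; exact h2)) hv2
    · -- both in C2
      rw [e2 x hx1, e2 y hy1] at hxy
      have h2 : x ^ p = y ^ p :=
        mul_left_cancel₀ (mul_ne_zero h3F (pow_ne_zero 2 hζ0)) hxy
      have h4 : (x - y) ^ p = 0 := by rw [sub_pow_char, h2, sub_self]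
      have := pow_eq_zero_iff hp.pos.ne' |>.mp h4
      exact sub_eq_zero.mp this
  constructor
  · -- bijective → conditions
    intro hbij
    by_contra hcon
    have hpm : p % 3 = 1 ∨ p % 3 = 2 := by
      have hnd : ¬(3 : ℕ) ∣ p := by
        intro hd
        exact hp3 ((Nat.prime_dvd_prime_iff_eq (by norm_num) hp).mp hd).symm
      omega
    have hcase : s % 3 = 0 ∨ (p % 3 = 1 ∧ s % 3 = 2) ∨ (p % 3 = 2 ∧ s % 3 = 1) := by
      omega
    rcases hcase with h0 | hmix
    · -- s ≡ 0 mod 3 : f is not injective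
      have hzs1 : ζ ^ s = 1 := by rw [hz_pow s, h0, pow_zero]
      obtain ⟨g, hg⟩ := IsCyclic.exists_generator (α := Fˣ)
      have horder : orderOf g = p ^ n - 1 := by
        rw [orderOf_eq_card_of_forall_mem_zpowers hg, Nat.card_units,
          Nat.card_eq_fintype_card, hcard]
      obtain ⟨k, hk⟩ := (Submonoid.mem_powers_iff _ _).mp
        (mem_powers_iff_mem_zpowers.mpr (hg (Units.mk0 ζ hζ0)))
      have hk3 : g ^ (3 * k) = 1 := by
        rw [mul_comm, pow_mul, hk]
        exact Units.ext (by simpa using h3)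
      have hdvd : (p ^ n - 1) ∣ 3 * k := horder ▸ orderOf_dvd_of_pow_eq_one hk3
      have hsk : s ∣ k := by
        rcases hdvd with ⟨c, hc⟩
        have hc' : 3 * k = 3 * (s * c) := by rw [hc, ← h3s]; ring
        exact ⟨c, Nat.eq_of_mul_eq_mul_left (by norm_num) hc'⟩
      obtain ⟨m, hm⟩ := hsk
      set x : F := ((g ^ m : Fˣ) : F) with hxdef
      have hx0 : x ≠ 0 := Units.ne_zero _
      have hxs : x ^ s = ζ := by
        rw [hxdef, ← Units.val_pow_eq_pow_val, ← pow_mul, show m * s = k by rw [hm, mul_comm], hk]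
        rfl
      have hne : ζ * x ≠ x := by
        intro h
        have h' : (ζ - 1) * x = 0 := by linear_combination h
        rcases mul_eq_zero.mp h' with h'' | h''
        · exact hζ1 (sub_eq_zero.mp h'')
        · exact hx0 h''
      apply hne
      apply hbij.injective
      have h' : (ζ * x) ^ s = ζ := by rw [mul_pow, hzs1, one_mul, hxs]
      show f (ζ * x) = f x
      rw [e1 _ h', e1 x hxs]
      linear_combination 3 * ζ ^ 2 * x ^ 3 * h3
    · -- p + s ≡ 0 mod 3 : f is not surjective (misses 3ζ)
      have hsnz : ζ ^ s ≠ 1 := by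
        rcases hmix with ⟨_, h2⟩ | ⟨_, h2⟩
        · rw [hz_pow s, h2]; exact hζ2
        · rw [hz_pow s, h2, pow_one]; exact hζ1
      have hA : (ζ ^ s) ^ 2 * (ζ ^ p) ^ 2 = 1 := by
        rcases hmix with ⟨h1', h2'⟩ | ⟨h1', h2'⟩
        · rw [hz_pow s, hz_pow p, h1', h2']
          linear_combination (ζ ^ 3 + 1) * h3
        · rw [hz_pow s, hz_pow p, h1', h2']
          linear_combination (ζ ^ 3 + 1) * h3
      obtain ⟨x, hx⟩ := hbij.surjective (3 * ζ)
      have hx' : f x = 3 * ζ := hx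
      have hts : ((3 : F) * ζ) ^ s = 3 ^ s * ζ ^ s := mul_pow _ _ _
      by_cases hx0 : x = 0
      · rw [hx0, hf0] at hx'
        exact (mul_ne_zero h3F hζ0) hx'.symm
      rcases htri x hx0 with h | h | h
      · rw [e0 x h] at hx'
        have h2 : ((3 : F) * x) ^ s = ((3 : F) * ζ) ^ s := by rw [hx']
        rw [c0 x h, hts] at h2
        exact hsnz (mul_left_cancel₀ (pow_ne_zero s h3F)
          (show (3 : F) ^ s * 1 = 3 ^ s * ζ ^ s by rw [mul_one]; exact h2)).symm
      · rw [e1 x h] at hx'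
        have h2 : ((3 : F) * ζ ^ 2 * x ^ 3) ^ s = ((3 : F) * ζ) ^ s := by rw [hx']
        rw [c1 x h, hts] at h2
        have h3' : (ζ ^ s) ^ 2 = ζ ^ s := mul_left_cancel₀ (pow_ne_zero s h3F) h2
        have h4 : ζ ^ s * ζ ^ s = ζ ^ s * 1 := by rw [mul_one]; linear_combination h3'
        exact hsnz (mul_left_cancel₀ (pow_ne_zero s hζ0) h4)
      · rw [e2 x h] at hx'
        have h2 : ((3 : F) * ζ ^ 2 * x ^ p) ^ s = ((3 : F) * ζ) ^ s := by rw [hx']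
        rw [c2 x h, hts] at h2
        have h2' : (3 : F) ^ s * ((ζ ^ s) ^ 2 * (ζ ^ p) ^ 2) = 3 ^ s * ζ ^ s := by
          rw [← mul_assoc]; exact h2
        rw [hA] at h2'
        exact hsnz (mul_left_cancel₀ (pow_ne_zero s h3F)
          (show (3 : F) ^ s * 1 = 3 ^ s * ζ ^ s by rw [mul_one, ← h2', mul_one])).symm
    -- conditions → bijective
  · rintro (⟨hp1, hs1⟩ | ⟨hp2, hs2⟩)
    · have hzs : ζ ^ s = ζ := by rw [hz_pow s, hs1, pow_one]
      have hzp : ζ ^ p = ζ := by rw [hz_pow p, hp1, pow_one]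
      apply main
      · rw [hzs]; exact hζ1
      · rw [hzs]; exact hζ2
      · rw [hzp]; exact hζ2
      · rw [hzs, hzp]
        intro hc
        exact hζ1 (by linear_combination hc - ζ * h3)
    · have hzs : ζ ^ s = ζ ^ 2 := by rw [hz_pow s, hs2]
      have hzp : ζ ^ p = ζ ^ 2 := by rw [hz_pow p, hp2]
      apply main
      · rw [hzs]; exact hζ2
      · rw [hzs]
        intro hc
        exact hζ1 (by linear_combination hc - ζ * h3)
      · rw [hzp]
        intro hc
        exact hζ1 (by linear_combination hc - ζ * h3)
      · rw [hzs, hzp]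
        intro hc
        exact hζ2 (by linear_combination hc - (ζ ^ 5 + ζ ^ 2) * h3)
end

section
/- Let q be a prime power, ℓ ∣ q-1, s = (q-1)/ℓ, γ a primitive element of F_q, ζ = γ^s, and C_i the cyclotomic cosets of index ℓ. Let g_0,...,g_{ℓ-1} ∈ F_q[x] and r_0,...,r_{ℓ-1} positive integers. Define P(0)=0 and P(x) = x^{r_i}·g_i(x^s)^ℓ for x ∈ C_i. Then P is a bijection of F_q if and only if {r_i·i mod ℓ : i=0,...,ℓ-1} is a complete set of residues modulo ℓ, and gcd(r_i, s)=1 and g_i(ζ^i) ≠ 0 for all i. -/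
theorem stmt_19 {F : Type*} [Field F] [Fintype F] (q ℓ s : ℕ)
    (hq : Fintype.card F = q) (hℓpos : 0 < ℓ) (hℓ : ℓ ∣ q - 1) (hs : s = (q - 1) / ℓ)
    (γ : F) (hγ0 : γ ≠ 0) (hγ : ∀ x : F, x ≠ 0 → ∃ k : ℕ, γ ^ k = x)
    (g : ℕ → Polynomial F) (r : ℕ → ℕ) (hr : ∀ i < ℓ, 0 < r i)
    (P : F → F) (hP0 : P 0 = 0)
    (hP : ∀ i < ℓ, ∀ x : F, x ≠ 0 → x ^ s = (γ ^ s) ^ i →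
      P x = x ^ (r i) * ((g i).eval (x ^ s)) ^ ℓ) :
    Function.Bijective P ↔
      (∀ k < ℓ, ∃ i < ℓ, r i * i ≡ k [MOD ℓ]) ∧
        ∀ i < ℓ, Nat.gcd (r i) s = 1 ∧ (g i).eval ((γ ^ s) ^ i) ≠ 0 := by
  classical
  have hq2 : 1 < q := hq ▸ Fintype.one_lt_card
  have hn : 0 < q - 1 := by omega
  have hsl : s * ℓ = q - 1 := by rw [hs]; exact Nat.div_mul_cancel hℓ
  have hspos : 0 < s := by
    rcases Nat.eq_zero_or_pos s with h | h
    · subst h; simp at hsl; omega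
    · exact h
  have hpow1 : ∀ x : F, x ≠ 0 → x ^ (q - 1) = 1 := fun x hx => by
    have := FiniteField.pow_card_sub_one_eq_one x hx
    rwa [hq] at this
  have hγ1 : γ ^ (q - 1) = 1 := hpow1 γ hγ0
  have hod : orderOf γ ∣ q - 1 := orderOf_dvd_of_pow_eq_one hγ1
  have hopos : 0 < orderOf γ := by
    rcases Nat.eq_zero_or_pos (orderOf γ) with h | h
    · rw [h] at hod
      exact absurd (Nat.eq_zero_of_zero_dvd hod) (by omega)
    · exact h
  have hcard : q - 1 ≤ orderOf γ := by
    have hsub : ({0}ᶜ : Finset F) ⊆ (Finset.range (orderOf γ)).image (γ ^ ·) := by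
      intro x hx
      rw [Finset.mem_compl, Finset.mem_singleton] at hx
      obtain ⟨k, hk⟩ := hγ x hx
      refine Finset.mem_image.mpr ⟨k % orderOf γ, Finset.mem_range.mpr (Nat.mod_lt _ hopos), ?_⟩
      rw [pow_mod_orderOf]; exact hk
    have h1 := Finset.card_le_card hsub
    have h2 := Finset.card_image_le (s := Finset.range (orderOf γ)) (f := (γ ^ ·))
    rw [Finset.card_compl, Finset.card_singleton, hq] at h1
    rw [Finset.card_range] at h2
    omega
  have hord : orderOf γ = q - 1 := Nat.le_antisymm (Nat.le_of_dvd hn hod) hcard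
  have hζord : orderOf (γ ^ s) = ℓ := by
    have h1 : (γ ^ s) ^ ℓ = 1 := by rw [← pow_mul, hsl, hγ1]
    have h2 : orderOf (γ ^ s) ∣ ℓ := orderOf_dvd_of_pow_eq_one h1
    have h3 : γ ^ (s * orderOf (γ ^ s)) = 1 := by rw [pow_mul]; exact pow_orderOf_eq_one _
    have h4 : (q - 1) ∣ s * orderOf (γ ^ s) := hord ▸ orderOf_dvd_of_pow_eq_one h3
    have h5 : ℓ ∣ orderOf (γ ^ s) := by
      rw [← hsl] at h4
      exact (Nat.mul_dvd_mul_iff_left hspos).mp h4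
    exact Nat.dvd_antisymm h2 h5
  have hζinj : ∀ i < ℓ, ∀ j < ℓ, (γ ^ s) ^ i = (γ ^ s) ^ j → i = j := by
    have key : ∀ i j, i ≤ j → j < ℓ → (γ ^ s) ^ i = (γ ^ s) ^ j → i = j := by
      intro i j hij hj he
      have hz : (γ ^ s) ^ i ≠ 0 := pow_ne_zero _ (pow_ne_zero _ hγ0)
      have h1 : (γ ^ s) ^ i * (γ ^ s) ^ (j - i) = (γ ^ s) ^ i * 1 := by
        rw [mul_one, ← pow_add, Nat.add_sub_cancel' hij]; exact he.symm
      have h2 : (γ ^ s) ^ (j - i) = 1 := mul_left_cancel₀ hz h1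
      have h3 := orderOf_dvd_of_pow_eq_one h2
      rw [hζord] at h3
      have := Nat.eq_zero_of_dvd_of_lt h3 (by omega)
      omega
    intro i hi j hj he
    rcases le_total i j with h | h
    · exact key i j h hj he
    · exact (key j i h hi he.symm).symm
  have hidx : ∀ x : F, x ≠ 0 → ∃ i < ℓ, x ^ s = (γ ^ s) ^ i := by
    intro x hx
    obtain ⟨k, hk⟩ := hγ x hx
    refine ⟨k % ℓ, Nat.mod_lt _ hℓpos, ?_⟩
    have h1 : x ^ s = γ ^ (k * s) := by rw [← hk, ← pow_mul]
    have h2 : k * s = (q - 1) * (k / ℓ) + s * (k % ℓ) := by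
      rw [← hsl]
      conv_lhs => rw [← Nat.div_add_mod k ℓ]
      ring
    rw [h1, h2, pow_add, pow_mul, hγ1, one_pow, one_mul, pow_mul]
  have hPxs : ∀ i < ℓ, ∀ x : F, x ≠ 0 → x ^ s = (γ ^ s) ^ i →
      (g i).eval ((γ ^ s) ^ i) ≠ 0 → (P x) ^ s = (γ ^ s) ^ ((r i * i) % ℓ) := by
    intro i hi x hx hxi hg
    rw [hP i hi x hx hxi, hxi, mul_pow]
    have h1 : (x ^ r i) ^ s = (γ ^ s) ^ (r i * i) := by
      rw [← pow_mul, mul_comm (r i) s, pow_mul, hxi, ← pow_mul, mul_comm i (r i), pow_mul]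
    have h2 : (((g i).eval ((γ ^ s) ^ i)) ^ ℓ) ^ s = 1 := by
      rw [← pow_mul, mul_comm ℓ s, hsl]; exact hpow1 _ hg
    rw [h1, h2, mul_one,
      show (r i * i) % ℓ = (r i * i) % orderOf (γ ^ s) by rw [hζord], pow_mod_orderOf]
  constructor
  · intro hbij
    have hgnz : ∀ i < ℓ, (g i).eval ((γ ^ s) ^ i) ≠ 0 := by
      intro i hi hcon
      have hxi : (γ ^ i) ^ s = (γ ^ s) ^ i := by rw [← pow_mul, mul_comm, pow_mul]
      have h1 : P (γ ^ i) = 0 := by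
        rw [hP i hi _ (pow_ne_zero _ hγ0) hxi, hxi, hcon, zero_pow (by omega : ℓ ≠ 0), mul_zero]
      have h2 := hbij.1 (h1.trans hP0.symm)
      exact pow_ne_zero i hγ0 h2
    refine ⟨?_, fun i hi => ⟨?_, hgnz i hi⟩⟩
    · intro k hk
      obtain ⟨x, hxP⟩ := hbij.2 (γ ^ k)
      have hxne : x ≠ 0 := by
        rintro rfl; rw [hP0] at hxP; exact pow_ne_zero k hγ0 hxP.symm
      obtain ⟨i, hi, hxi⟩ := hidx x hxne
      refine ⟨i, hi, ?_⟩
      have h1 := hPxs i hi x hxne hxi (hgnz i hi)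
      rw [hxP] at h1
      have h2 : (γ ^ k) ^ s = (γ ^ s) ^ k := by rw [← pow_mul, mul_comm, pow_mul]
      rw [h2] at h1
      have h3 := hζinj k hk _ (Nat.mod_lt _ hℓpos) h1
      show (r i * i) % ℓ = k % ℓ
      rw [Nat.mod_eq_of_lt hk]
      exact h3.symm
    · by_contra hd
      have hds : Nat.gcd (r i) s ∣ s := Nat.gcd_dvd_right _ _
      have hdr : Nat.gcd (r i) s ∣ r i := Nat.gcd_dvd_left _ _
      have hdpos : 0 < Nat.gcd (r i) s := Nat.gcd_pos_of_pos_right _ hspos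
      have hd2 : 2 ≤ Nat.gcd (r i) s := by omega
      set d := Nat.gcd (r i) s with hdd
      set t := s / d with ht
      have htd : t * d = s := Nat.div_mul_cancel hds
      have htpos : 0 < t := by
        rcases Nat.eq_zero_or_pos t with h | h
        · rw [h, zero_mul] at htd; omega
        · exact h
      have hts : t < s := by nlinarith
      have hxne : (γ : F) ^ i ≠ 0 := pow_ne_zero _ hγ0
      have hyne : (γ : F) ^ (i + ℓ * t) ≠ 0 := pow_ne_zero _ hγ0
      have hxy : (γ : F) ^ i ≠ γ ^ (i + ℓ * t) := by
        intro h
        have h1 : γ ^ i * 1 = γ ^ i * γ ^ (ℓ * t) := by rw [mul_one, ← pow_add]; exact h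
        have h2 : γ ^ (ℓ * t) = 1 := (mul_left_cancel₀ hxne h1).symm
        have h3 := orderOf_dvd_of_pow_eq_one h2
        rw [hord] at h3
        have h4 : ℓ * t < q - 1 := by nlinarith
        have h5 := Nat.eq_zero_of_dvd_of_lt h3 h4
        have h6 : 0 < ℓ * t := Nat.mul_pos hℓpos htpos
        omega
      have hxs : ((γ : F) ^ i) ^ s = (γ ^ s) ^ i := by rw [← pow_mul, mul_comm, pow_mul]
      have hys : ((γ : F) ^ (i + ℓ * t)) ^ s = (γ ^ s) ^ i := by
        rw [← pow_mul, add_mul, pow_add]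
        have h5 : ℓ * t * s = (q - 1) * t := by rw [← hsl]; ring
        rw [h5, pow_mul γ (q - 1) t, hγ1, one_pow, mul_one, mul_comm i s, pow_mul]
      have hrd : r i / d * d = r i := Nat.div_mul_cancel hdr
      have hyrx : ((γ : F) ^ (i + ℓ * t)) ^ r i = (γ ^ i) ^ r i := by
        rw [← pow_mul, ← pow_mul, add_mul, pow_add]
        have h6 : ℓ * t * r i = (q - 1) * (r i / d) := by
          have h7 : r i = r i / d * d := hrd.symm
          calc ℓ * t * r i = ℓ * t * (r i / d * d) := by rw [← h7]
            _ = s * ℓ * (r i / d) := by rw [← htd]; ring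
            _ = (q - 1) * (r i / d) := by rw [hsl]
        rw [h6, pow_mul γ (q - 1) (r i / d), hγ1, one_pow, mul_one]
      have hPeq : P (γ ^ i) = P (γ ^ (i + ℓ * t)) := by
        rw [hP i hi _ hxne hxs, hP i hi _ hyne hys, hyrx, hxs, hys]
      exact hxy (hbij.1 hPeq)
  · rintro ⟨hcomp, hcond⟩
    have hinj2 : ∀ i < ℓ, ∀ j < ℓ, (r i * i) % ℓ = (r j * j) % ℓ → i = j := by
      set f : Fin ℓ → Fin ℓ := fun i => ⟨(r i.1 * i.1) % ℓ, Nat.mod_lt _ hℓpos⟩ with hf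
      have hsurj : Function.Surjective f := by
        intro k
        obtain ⟨i, hi, hik⟩ := hcomp k.1 k.2
        refine ⟨⟨i, hi⟩, ?_⟩
        apply Fin.ext
        have hik' : (r i * i) % ℓ = (k : ℕ) % ℓ := hik
        show (r i * i) % ℓ = (k : ℕ)
        rw [hik', Nat.mod_eq_of_lt k.2]
      have hfinj : Function.Injective f := Finite.injective_iff_surjective.mpr hsurj
      intro i hi j hj hij
      have h1 : f ⟨i, hi⟩ = f ⟨j, hj⟩ := Fin.ext hij
      have h2 := hfinj h1
      exact congrArg Fin.val h2
    have hPne : ∀ z : F, z ≠ 0 → P z ≠ 0 := by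
      intro z hz
      obtain ⟨i, hi, hzi⟩ := hidx z hz
      rw [hP i hi z hz hzi, hzi]
      exact mul_ne_zero (pow_ne_zero _ hz) (pow_ne_zero _ (hcond i hi).2)
    have hginj : Function.Injective P := by
      intro x y hxy
      rcases eq_or_ne x 0 with rfl | hx0
      · rcases eq_or_ne y 0 with rfl | hy0
        · rfl
        · exact absurd (hxy.symm.trans hP0) (hPne y hy0)
      rcases eq_or_ne y 0 with rfl | hy0
      · exact absurd (hxy.trans hP0) (hPne x hx0)
      obtain ⟨i, hi, hxi⟩ := hidx x hx0
      obtain ⟨j, hj, hyj⟩ := hidx y hy0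
      have hgi := (hcond i hi).2
      have hgj := (hcond j hj).2
      have h1 := hPxs i hi x hx0 hxi hgi
      have h2 := hPxs j hj y hy0 hyj hgj
      rw [hxy] at h1
      have hij : i = j :=
        hinj2 i hi j hj (hζinj _ (Nat.mod_lt _ hℓpos) _ (Nat.mod_lt _ hℓpos) (h1.symm.trans h2))
      subst hij
      have h3 : x ^ r i = y ^ r i := by
        have h4 := hxy
        rw [hP i hi x hx0 hxi, hP i hi y hy0 hyj, hxi, hyj] at h4
        exact mul_right_cancel₀ (pow_ne_zero _ hgi) h4
      have hu1 : (x * y⁻¹) ^ s = 1 := by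
        rw [mul_pow, inv_pow, hxi, hyj]
        exact mul_inv_cancel₀ (pow_ne_zero _ (pow_ne_zero _ hγ0))
      have hur : (x * y⁻¹) ^ r i = 1 := by
        rw [mul_pow, inv_pow, h3]
        exact mul_inv_cancel₀ (pow_ne_zero _ hy0)
      have hor : orderOf (x * y⁻¹) ∣ 1 := by
        rw [← (hcond i hi).1]
        exact Nat.dvd_gcd (orderOf_dvd_of_pow_eq_one hur) (orderOf_dvd_of_pow_eq_one hu1)
      have hu : x * y⁻¹ = 1 := orderOf_eq_one_iff.mp (Nat.dvd_one.mp hor)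
      calc x = x * y⁻¹ * y := by field_simp
        _ = y := by rw [hu, one_mul]
    exact Finite.injective_iff_bijective.mp hginj
end
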